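/- arXiv:1312.4983 — 2 statements merged into one kernel-verified Lean document; each statement's English description precedes it below -/
import Mathlib

section
/- Fix n ≥ 1 and let the right and left forward branching processes have the random initial conditions W_0 = R_n := Σ_{j=1}^n B_{0,j} and Z_0 = n − R_n. Then on the event {ρ_n < ∞} one has W_i = U_i^{ρ_n} and Z_i = D_{−i}^{ρ_n} for all i ≥ 0. Moreover, the sequences (W_i)_{i≥1} and (Z_i)_{i≥1} are conditionally independent given (W_0, Z_0). -/
open Filter Finset
open scoped ENNReal NNReal

noncomputable section

/-- Number of `true`s among the first `m` values of the Boolean sequence `b`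
(i.e. `#{1 ≤ j ≤ m : B_j = 1}` with 0-based indexing). -/
def countTrue (b : ℕ → Bool) (m : ℕ) : ℕ := ((Finset.range m).filter fun j => b j = true).card

/-- Number of `false`s among the first `m` values of the Boolean sequence `b`. -/
def countFalse (b : ℕ → Bool) (m : ℕ) : ℕ := ((Finset.range m).filter fun j => b j = false).card

/-- The left forward branching process `Z` driven by the Bernoulli field `b`,
with initial condition `Z_0 = z`:
`Z_i = inf{m ≥ 0 : Σ_{j=1}^m B_{-i,j} = Z_{i-1}} - Z_{i-1}` for `i ≥ 1`. -/
def leftBP (b : ℤ → ℕ → Bool) (z : ℕ) : ℕ → ℕ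
  | 0 => z
  | i + 1 => sInf {m : ℕ | countTrue (b (-((i : ℤ) + 1))) m = leftBP b z i} - leftBP b z i

/-- The right forward branching process `W` driven by the Bernoulli field `b`,
with initial condition `W_0 = w`:
`W_i = inf{m ≥ 0 : Σ_{j=1}^m (1 - B_{i,j}) = W_{i-1}} - W_{i-1}` for `i ≥ 1`. -/
def rightBP (b : ℤ → ℕ → Bool) (w : ℕ) : ℕ → ℕ
  | 0 => w
  | i + 1 => sInf {m : ℕ | countFalse (b ((i : ℤ) + 1)) m = rightBP b w i} - rightBP b w i

/-- The backward branching process `V` driven by the Bernoulli field `b`,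
with initial condition `V_0 = v`:
`V_{i+1} = inf{m ≥ 0 : Σ_{j=1}^m B_{i,j} = V_i + 1} - V_i - 1`. -/
def backBP (b : ℤ → ℕ → Bool) (v : ℕ) : ℕ → ℕ
  | 0 => v
  | i + 1 => sInf {m : ℕ | countTrue (b (i : ℤ)) m = backBP b v i + 1} - (backBP b v i + 1)

/-- `τ_x^ξ = inf{t : ξ_t ≥ x}`, the first time the process `ξ` is above level `x`
(`= ∞` if there is no such time). -/
def tauAbove (ξ : ℕ → ℕ) (x : ℝ) : ℕ∞ := sInf {t : ℕ∞ | ∃ k : ℕ, t = k ∧ x ≤ (ξ k : ℝ)}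

/-- `σ_x^ξ = inf{t : ξ_t ≤ x}`, the first time the process `ξ` is below level `x`
(`= ∞` if there is no such time). -/
def sigmaBelow (ξ : ℕ → ℕ) (x : ℝ) : ℕ∞ := sInf {t : ℕ∞ | ∃ k : ℕ, t = k ∧ (ξ k : ℝ) ≤ x}

/-- A setup for a one-dimensional excited random walk in an i.i.d. cookie environment with
at most `M` cookies per site, satisfying assumptions (A1)-(A3), together with the auxiliary
Bernoulli random variables `B_{x,j}` (which, conditionally on the cookie environment, are
independent with `B_{x,j} ~ Bernoulli(ω(x,j))`) and the walk `X` constructed from them.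
Cookie indices are 0-based: `cookie ω x j` is the cookie used on the `(j+1)`-th visit to `x`. -/
structure ERWSetup where
  /-- the underlying sample space -/
  Ω : Type
  [mΩ : MeasurableSpace Ω]
  /-- the (averaged) probability measure -/
  μ : MeasureTheory.Measure Ω
  isProb : MeasureTheory.IsProbabilityMeasure μ
  /-- the number of cookies per site -/
  M : ℕ
  /-- the random cookie environment -/
  cookie : Ω → ℤ → ℕ → ℝ
  /-- the auxiliary Bernoulli random variables -/
  B : Ω → ℤ → ℕ → Bool
  /-- the excited random walk -/
  X : ℕ → Ω → ℤ
  meas_cookie : Measurable cookie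
  meas_B : Measurable B
  meas_X : ∀ n, Measurable (X n)
  cookie_mem : ∀ ω x j, cookie ω x j ∈ Set.Icc (0 : ℝ) 1
  /-- (A1): almost surely, all cookies beyond the first `M` at each site equal `1/2` -/
  A1 : ∀ᵐ ω ∂μ, ∀ (x : ℤ) (j : ℕ), M ≤ j → cookie ω x j = 1 / 2
  /-- (A2): the cookie stacks at distinct sites are independent -/
  A2_indep : ProbabilityTheory.iIndepFun (fun x ω => cookie ω x) μ
  /-- (A2): the cookie stacks at distinct sites are identically distributed -/
  A2_ident : ∀ x y : ℤ,
    ProbabilityTheory.IdentDistrib (fun ω => cookie ω x) (fun ω => cookie ω y) μ μ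
  /-- (A3), positive part -/
  A3_pos : 0 < ∫ ω, ∏ j ∈ Finset.range M, cookie ω 0 j ∂μ
  /-- (A3), negative part -/
  A3_neg : 0 < ∫ ω, ∏ j ∈ Finset.range M, (1 - cookie ω 0 j) ∂μ
  /-- conditionally on the cookie environment, the `B_{x,j}` are independent with
  `B_{x,j} ~ Bernoulli(ω(x,j))` (stated via conditional expectations given the σ-algebra
  generated by the environment) -/
  condB : ∀ (s : Finset (ℤ × ℕ)) (bv : ℤ × ℕ → Bool),
    (MeasureTheory.condExp (MeasurableSpace.comap cookie inferInstance) μ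
        (fun ω => if ∀ p ∈ s, B ω p.1 p.2 = bv p then (1 : ℝ) else 0))
      =ᵐ[μ] fun ω => ∏ p ∈ s, (if bv p then cookie ω p.1 p.2 else 1 - cookie ω p.1 p.2)
  /-- the walk starts at the origin -/
  X_zero : ∀ ω, X 0 ω = 0
  /-- on the `j`-th visit to a site `x`, the walk steps right if `B_{x,j} = 1`
  and left if `B_{x,j} = 0` -/
  X_step : ∀ ω n, X (n + 1) ω = X n ω +
    (if B ω (X n ω) (((Finset.range (n + 1)).filter fun k => X k ω = X n ω).card - 1)
      then 1 else -1)

attribute [instance] ERWSetup.mΩ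

open MeasureTheory ProbabilityTheory

namespace ERWSetup

variable (S : ERWSetup)

/-- the parameter `δ = E[Σ_j (2ω(0,j) - 1)]` -/
def delta : ℝ := ∫ ω, ∑' j : ℕ, (2 * S.cookie ω 0 j - 1) ∂S.μ

/-- `T_m = inf{k ≥ 0 : X_k = m}`, the hitting time of the site `m` by the walk
(`= ∞` if `m` is never visited). -/
def T (m : ℤ) (ω : S.Ω) : ℕ∞ := sInf {t : ℕ∞ | ∃ k : ℕ, t = k ∧ S.X k ω = m}

/-- `ρ_k`, the time of the `k`-th return of the walk to the origin. -/
def ret : ℕ → S.Ω → ℕ∞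
  | 0, _ => 0
  | k + 1, ω => sInf {t : ℕ∞ | ∃ j : ℕ, t = j ∧ ret k ω < (j : ℕ∞) ∧ S.X j ω = 0}

/-- `U_x^n = #{k ≤ n : X_{k-1} = x, X_k = x+1}`, the number of steps to the right
from `x` in the first `n` steps. -/
def U (x : ℤ) (n : ℕ) (ω : S.Ω) : ℕ :=
  ((Finset.Icc 1 n).filter fun k => S.X (k - 1) ω = x ∧ S.X k ω = x + 1).card

/-- `D_x^n = #{k ≤ n : X_{k-1} = x, X_k = x-1}`, the number of steps to the left
from `x` in the first `n` steps. -/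
def D (x : ℤ) (n : ℕ) (ω : S.Ω) : ℕ :=
  ((Finset.Icc 1 n).filter fun k => S.X (k - 1) ω = x ∧ S.X k ω = x - 1).card

/-- `R_n = Σ_{j=1}^n B_{0,j}` -/
def R (n : ℕ) (ω : S.Ω) : ℕ := countTrue (S.B ω 0) n

/-- `L_n(x) = #{k < n : X_k = x}`, the local time of the walk at `x` before time `n`. -/
def L (n : ℕ) (x : ℤ) (ω : S.Ω) : ℕ := ((Finset.range n).filter fun k => S.X k ω = x).card

/-- `r_1^V = inf{i > 0 : V_i = 0}`, the first return to `0` of the backward branching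
process started at `V_0 = 0`. -/
def r1 (ω : S.Ω) : ℕ∞ := sInf {t : ℕ∞ | ∃ k : ℕ, t = k ∧ 0 < k ∧ backBP (S.B ω) 0 k = 0}

/-- `S_1^V = Σ_{i=0}^{r_1^V - 1} V_i`, the total progeny of the backward branching process
(started at `V_0 = 0`) before its first return to `0`. -/
def S1 (ω : S.Ω) : ℝ≥0∞ := ∑' i : ℕ, if (i : ℕ∞) < S.r1 ω then (backBP (S.B ω) 0 i : ℝ≥0∞) else 0

/-- `r̄ = E_V[r_1^V]`, the mean return time to `0` of the backward branching process. -/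
def rbar : ℝ := (∫⁻ ω, (S.r1 ω : ℝ≥0∞) ∂S.μ).toReal

end ERWSetup
open MeasureTheory ProbabilityTheory


namespace ERWAux

/-- number of visits of the path `Y` to `x` before time `t` -/
def pv (Y : ℕ → ℤ) (x : ℤ) (t : ℕ) : ℕ := ((range t).filter fun k => Y k = x).card

/-- number of right steps from `x` among steps `1,…,t` -/
def pu (Y : ℕ → ℤ) (x : ℤ) (t : ℕ) : ℕ :=
  ((Icc 1 t).filter fun k => Y (k - 1) = x ∧ Y k = x + 1).card

/-- number of left steps from `x` among steps `1,…,t` -/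
def pd (Y : ℕ → ℤ) (x : ℤ) (t : ℕ) : ℕ :=
  ((Icc 1 t).filter fun k => Y (k - 1) = x ∧ Y k = x - 1).card

lemma countTrue_succ (b : ℕ → Bool) (m : ℕ) :
    countTrue b (m + 1) = countTrue b m + if b m then 1 else 0 := by
  unfold countTrue
  rw [Finset.range_add_one, Finset.filter_insert]
  by_cases h : b m = true
  · simp [h, Finset.card_insert_of_notMem]
  · simp [h]

lemma countFalse_succ (b : ℕ → Bool) (m : ℕ) :
    countFalse b (m + 1) = countFalse b m + if b m then 0 else 1 := by
  unfold countFalse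
  rw [Finset.range_add_one, Finset.filter_insert]
  by_cases h : b m
  · simp [h]
  · simp [h, Finset.card_insert_of_notMem]

lemma countTrue_add_countFalse (b : ℕ → Bool) (m : ℕ) :
    countTrue b m + countFalse b m = m := by
  induction m with
  | zero => simp [countTrue, countFalse]
  | succ m ih =>
    rw [countTrue_succ, countFalse_succ]
    by_cases h : b m <;> simp [h] <;> omega

lemma countFalse_mono (b : ℕ → Bool) {m m' : ℕ} (h : m ≤ m') :
    countFalse b m ≤ countFalse b m' :=
  Finset.card_le_card (Finset.filter_subset_filter _ (Finset.range_subset_range.2 h))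

lemma pv_succ (Y : ℕ → ℤ) (x : ℤ) (t : ℕ) :
    pv Y x (t + 1) = pv Y x t + if Y t = x then 1 else 0 := by
  unfold pv
  rw [Finset.range_add_one, Finset.filter_insert]
  by_cases h : Y t = x
  · simp [h, Finset.card_insert_of_notMem]
  · simp [h]

lemma Icc_one_succ (t : ℕ) : Icc 1 (t + 1) = insert (t + 1) (Icc 1 t) := by
  ext k; simp [Finset.mem_Icc, Finset.mem_insert]; omega

lemma pu_succ (Y : ℕ → ℤ) (x : ℤ) (t : ℕ) :
    pu Y x (t + 1) = pu Y x t + if (Y t = x ∧ Y (t + 1) = x + 1) then 1 else 0 := by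
  unfold pu
  rw [Icc_one_succ, Finset.filter_insert]
  have h1 : (t + 1) - 1 = t := by omega
  by_cases h : Y t = x ∧ Y (t + 1) = x + 1
  · rw [if_pos (by rw [h1]; exact h)]
    rw [Finset.card_insert_of_notMem (by simp [Finset.mem_Icc]), if_pos h]
  · rw [if_neg (by rw [h1]; exact h), if_neg h]; simp

lemma pd_succ (Y : ℕ → ℤ) (x : ℤ) (t : ℕ) :
    pd Y x (t + 1) = pd Y x t + if (Y t = x ∧ Y (t + 1) = x - 1) then 1 else 0 := by
  unfold pd
  rw [Icc_one_succ, Finset.filter_insert]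
  have h1 : (t + 1) - 1 = t := by omega
  by_cases h : Y t = x ∧ Y (t + 1) = x - 1
  · rw [if_pos (by rw [h1]; exact h)]
    rw [Finset.card_insert_of_notMem (by simp [Finset.mem_Icc]), if_pos h]
  · rw [if_neg (by rw [h1]; exact h), if_neg h]; simp

variable {c : ℤ → ℕ → Bool} {Y : ℕ → ℤ}

/-- the step condition for a path driven by the coin field `c` -/
def Steps (c : ℤ → ℕ → Bool) (Y : ℕ → ℤ) : Prop :=
  ∀ k, Y (k + 1) = Y k + (if c (Y k) (pv Y (Y k) k) then 1 else -1)

lemma Steps.pm (hs : Steps c Y) (k : ℕ) : Y (k + 1) = Y k + 1 ∨ Y (k + 1) = Y k - 1 := by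
  rcases (hs k) with h
  by_cases hc : c (Y k) (pv Y (Y k) k) <;> simp [hc] at h <;> [left; right] <;> omega

/-- (L1): the coins used at a site match the departures, in order -/
lemma counts_eq (hs : Steps c Y) (t : ℕ) (x : ℤ) :
    pu Y x t = countTrue (c x) (pv Y x t) ∧ pd Y x t = countFalse (c x) (pv Y x t) := by
  induction t with
  | zero => simp [pu, pd, pv, countTrue, countFalse]
  | succ t ih =>
    rw [pu_succ, pd_succ, pv_succ]
    by_cases h : Y t = x
    · subst h
      rw [if_pos rfl, countTrue_succ, countFalse_succ, ih.1, ih.2]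
      have hst := hs t
      by_cases hc : c (Y t) (pv Y (Y t) t)
      · rw [if_pos hc] at hst ⊢
        rw [if_pos ⟨rfl, by omega⟩, if_neg (by omega)]
        simp [hc]
      · rw [if_neg hc] at hst ⊢
        rw [if_neg (by omega), if_pos ⟨rfl, by omega⟩]
        simp [hc]
    · rw [if_neg h, if_neg (fun hh => h hh.1), if_neg (fun hh => h hh.1)]
      simpa using ih

/-- (L2): up-crossing/down-crossing balance -/
lemma up_down (hY0 : Y 0 = 0) (hs : Steps c Y) (x : ℤ) (hx : 0 ≤ x) (t : ℕ) :
    pu Y x t = pd Y (x + 1) t + if x < Y t then 1 else 0 := by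
  induction t with
  | zero => simp [pu, pd, hY0, if_neg (not_lt.2 hx)]
  | succ t ih =>
    rw [pu_succ, pd_succ, ih]
    have hpm := hs.pm t
    have h1 : x + 1 - 1 = x := by ring
    rw [h1]
    rcases hpm with h | h <;> split_ifs <;> omega


/-- the minimal `m` with `countFalse (c x) m = pd Y x N` is the number of visits to `x` -/
lemma sInf_countFalse_eq (hY0 : Y 0 = 0) (hs : Steps c Y) (N : ℕ) (hN : Y N = 0)
    (x : ℤ) (hxpos : 0 < x) :
    sInf {m : ℕ | countFalse (c x) m = pd Y x N} = pv Y x N := by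
  have hL1 := counts_eq hs N x
  rcases Nat.eq_zero_or_pos (pv Y x N) with hV0 | hVpos
  · have hpd : pd Y x N = 0 := by rw [hL1.2, hV0]; simp [countFalse]
    rw [hV0, hpd]
    exact Nat.le_antisymm (Nat.sInf_le (by simp [countFalse])) (Nat.zero_le _)
  · have hsne : ((range N).filter (fun k => Y k = x)).Nonempty :=
      Finset.card_pos.mp (by simpa [pv] using hVpos)
    have hKmem := Finset.max'_mem _ hsne
    have hKmax : ∀ k ∈ (range N).filter (fun k => Y k = x),
        k ≤ (Finset.max' _ hsne) := fun k hk => Finset.le_max' _ k hk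
    obtain ⟨hKlt, hYK⟩ : (Finset.max' _ hsne) < N ∧ Y (Finset.max' _ hsne) = x := by
      have := Finset.mem_filter.1 hKmem
      exact ⟨Finset.mem_range.1 this.1, this.2⟩
    generalize hKdef : (Finset.max' _ hsne) = K at hKmem hKmax hKlt hYK
    have hvK1 : pv Y x (K + 1) = pv Y x N := by
      unfold pv
      congr 1
      ext k
      simp only [Finset.mem_filter, Finset.mem_range]
      constructor
      · rintro ⟨hk, hY⟩
        exact ⟨by omega, hY⟩
      · rintro ⟨hk, hY⟩
        have hmem : k ∈ (range N).filter (fun k => Y k = x) := by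
          simp [Finset.mem_filter, Finset.mem_range, hk, hY]
        have := hKmax k hmem
        exact ⟨by omega, hY⟩
    have hvK : pv Y x K + 1 = pv Y x N := by
      have := pv_succ Y x K
      rw [if_pos hYK] at this
      omega
    -- the last coin used at x must be false
    have hcoin : c x (pv Y x K) = false := by
      by_contra htrue
      have htrue' : c x (pv Y x K) = true := by
        revert htrue; cases c x (pv Y x K) <;> simp
      have hstep : Y (K + 1) = x + 1 := by
        have h := hs K
        rw [hYK] at h
        rw [htrue'] at h
        simpa using h
      have hPex : ∃ m, K + 1 ≤ m ∧ Y m ≤ x := ⟨N, by omega, by rw [hN]; omega⟩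
      obtain ⟨m0, hm0spec, hm0min⟩ :
          ∃ m0, (K + 1 ≤ m0 ∧ Y m0 ≤ x) ∧ ∀ k, k < m0 → ¬(K + 1 ≤ k ∧ Y k ≤ x) :=
        ⟨Nat.find hPex, Nat.find_spec hPex, fun k hk => Nat.find_min hPex hk⟩
      have hm0leN : m0 ≤ N := by
        by_contra hgt
        exact hm0min N (by omega) ⟨by omega, by rw [hN]; omega⟩
      have hm0gt : K + 1 < m0 := by
        rcases Nat.lt_or_ge (K+1) m0 with h | h
        · exact h
        · exfalso
          have : m0 = K + 1 := by omega
          rw [this, hstep] at hm0spec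
          omega
      obtain ⟨m1, rfl⟩ : ∃ m1, m0 = m1 + 1 := ⟨m0 - 1, by omega⟩
      have hYm1 : x + 1 ≤ Y m1 := by
        have h := hm0min m1 (by omega)
        rcases not_and_or.1 h with h' | h'
        · omega
        · omega
      have hpm := hs.pm m1
      have hYm0 : Y (m1 + 1) = x := by omega
      have hm0ltN : m1 + 1 < N := by
        rcases Nat.lt_or_ge (m1+1) N with h | h
        · exact h
        · exfalso
          have : m1 + 1 = N := by omega
          rw [this, hN] at hYm0
          omega
      have hmem : m1 + 1 ∈ (range N).filter (fun k => Y k = x) := by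
        simp [Finset.mem_filter, Finset.mem_range, hm0ltN, hYm0]
      have := hKmax _ hmem
      omega
    have hcfV : countFalse (c x) (pv Y x N) = countFalse (c x) (pv Y x K) + 1 := by
      rw [← hvK, countFalse_succ, hcoin]
      simp
    have hmem : pv Y x N ∈ {m : ℕ | countFalse (c x) m = pd Y x N} := by
      simp only [Set.mem_setOf_eq]
      rw [hL1.2]
    have hmin : ∀ m ∈ {m : ℕ | countFalse (c x) m = pd Y x N}, pv Y x N ≤ m := by
      intro m hm
      by_contra hlt
      push_neg at hlt
      have h1 : countFalse (c x) m ≤ countFalse (c x) (pv Y x K) :=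
        countFalse_mono _ (by omega)
      have h2 : countFalse (c x) m = pd Y x N := hm
      rw [hL1.2] at h2
      omega
    exact Nat.le_antisymm (Nat.sInf_le hmem) (hmin _ (Nat.sInf_mem ⟨_, hmem⟩))

/-- key identity between the forward branching recursion and crossing numbers -/
theorem rightBP_eq (hY0 : Y 0 = 0) (hs : Steps c Y) (N : ℕ) (hN : Y N = 0) :
    ∀ i : ℕ, rightBP c (pu Y 0 N) i = pu Y (i : ℤ) N := by
  intro i
  induction i with
  | zero => simp [rightBP]
  | succ i ih =>
    have hxcast : ((i + 1 : ℕ) : ℤ) = (i : ℤ) + 1 := by push_cast; ring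
    have hD : rightBP c (pu Y 0 N) i = pd Y ((i : ℤ) + 1) N := by
      rw [ih]
      have h2 := up_down hY0 hs (i : ℤ) (by positivity) N
      rw [hN, if_neg (by omega)] at h2
      omega
    have hL1 := counts_eq hs N ((i : ℤ) + 1)
    have hsum : pu Y ((i : ℤ) + 1) N + pd Y ((i : ℤ) + 1) N = pv Y ((i : ℤ) + 1) N := by
      rw [hL1.1, hL1.2]; exact countTrue_add_countFalse _ _
    show sInf {m : ℕ | countFalse (c ((i : ℤ) + 1)) m = rightBP c (pu Y 0 N) i}
          - rightBP c (pu Y 0 N) i = pu Y ((i + 1 : ℕ) : ℤ) N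
    rw [hxcast, hD, sInf_countFalse_eq hY0 hs N hN ((i : ℤ) + 1) (by positivity)]
    omega


lemma countFalse_not (b : ℕ → Bool) (m : ℕ) :
    countFalse (fun j => !(b j)) m = countTrue b m := by
  unfold countFalse countTrue
  congr 1
  apply Finset.filter_congr
  intro k _
  cases h : b k <;> simp [h]

lemma pv_neg (Y : ℕ → ℤ) (x : ℤ) (t : ℕ) : pv (fun k => -(Y k)) (-x) t = pv Y x t := by
  unfold pv
  congr 1
  apply Finset.filter_congr
  intro k _
  show -(Y k) = -x ↔ Y k = x
  omega

lemma pu_neg (Y : ℕ → ℤ) (x : ℤ) (t : ℕ) : pu (fun k => -(Y k)) x t = pd Y (-x) t := by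
  unfold pu pd
  congr 1
  apply Finset.filter_congr
  intro k _
  show (-(Y (k - 1)) = x ∧ -(Y k) = x + 1) ↔ (Y (k - 1) = -x ∧ Y k = -x - 1)
  omega

lemma Steps.neg (hs : Steps c Y) : Steps (fun x j => !(c (-x) j)) (fun k => -(Y k)) := by
  intro k
  have h := hs k
  have hv : pv (fun k => -(Y k)) (-(Y k)) k = pv Y (Y k) k := pv_neg Y (Y k) k
  simp only [hv]
  have hnn : -(-(Y k)) = Y k := by ring
  rw [hnn]
  cases hc : c (Y k) (pv Y (Y k) k)
  · rw [hc] at h; simp at h; simp [h]; omega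
  · rw [hc] at h; simp at h; simp [h]; omega

lemma leftBP_eq_rightBP_neg (c : ℤ → ℕ → Bool) (z : ℕ) :
    ∀ i, leftBP c z i = rightBP (fun x j => !(c (-x) j)) z i := by
  intro i
  induction i with
  | zero => rfl
  | succ i ih =>
    show sInf {m : ℕ | countTrue (c (-((i : ℤ) + 1))) m = leftBP c z i} - leftBP c z i = _
    rw [ih]
    show _ = sInf {m : ℕ | countFalse (fun j => !(c (-((i : ℤ) + 1)) j)) m
        = rightBP (fun x j => !(c (-x) j)) z i} - rightBP (fun x j => !(c (-x) j)) z i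
    congr 2
    ext m
    simp only [Set.mem_setOf_eq, countFalse_not]

/-- the left branching process equals left-crossing numbers -/
theorem leftBP_eq (hY0 : Y 0 = 0) (hs : Steps c Y) (N : ℕ) (hN : Y N = 0) (i : ℕ) :
    leftBP c (pd Y 0 N) i = pd Y (-(i : ℤ)) N := by
  rw [leftBP_eq_rightBP_neg]
  have h0 : pd Y 0 N = pu (fun k => -(Y k)) 0 N := by rw [pu_neg]; norm_num
  rw [h0]
  have := rightBP_eq (c := fun x j => !(c (-x) j)) (Y := fun k => -(Y k))
      (by simp [hY0]) hs.neg N (by simp [hN]) i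
  rw [this, pu_neg]

end ERWAux

section RetLemmas

lemma enat_sInf_empty {P : ℕ → Prop} (h : ¬∃ k, P k) :
    sInf {t : ℕ∞ | ∃ k : ℕ, t = (k : ℕ∞) ∧ P k} = ⊤ := by
  have he : {t : ℕ∞ | ∃ k : ℕ, t = (k : ℕ∞) ∧ P k} = ∅ := by
    ext t
    simp only [Set.mem_setOf_eq, Set.mem_empty_iff_false, iff_false]
    rintro ⟨k, -, hk⟩
    exact h ⟨k, hk⟩
  rw [he, sInf_empty]

lemma enat_sInf_coe {P : ℕ → Prop} (h : ∃ k, P k) :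
    sInf {t : ℕ∞ | ∃ k : ℕ, t = (k : ℕ∞) ∧ P k} = (sInf {k | P k} : ℕ) := by
  refine le_antisymm (sInf_le ⟨sInf {k | P k}, rfl, Nat.sInf_mem h⟩) (le_sInf ?_)
  rintro t ⟨k, rfl, hk⟩
  exact_mod_cast Nat.sInf_le hk

/-- properties of the return times: position `0` and the number of prior zeros -/
lemma ret_spec (S : ERWSetup) (ω : S.Ω) :
    ∀ k, S.ret k ω ≠ ⊤ → (S.X (S.ret k ω).toNat ω = 0 ∧
      ((Finset.range (S.ret k ω).toNat).filter fun j => S.X j ω = 0).card = k) := by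
  intro k
  induction k with
  | zero =>
    intro _
    have h0 : S.ret 0 ω = 0 := rfl
    rw [h0]
    simpa using S.X_zero ω
  | succ k ih =>
    intro h
    have hdef : S.ret (k+1) ω
        = sInf {t : ℕ∞ | ∃ j : ℕ, t = (j : ℕ∞) ∧ S.ret k ω < (j : ℕ∞) ∧ S.X j ω = 0} := rfl
    have hex : ∃ j : ℕ, S.ret k ω < (j : ℕ∞) ∧ S.X j ω = 0 := by
      by_contra hne
      exact h (hdef.trans (enat_sInf_empty hne))
    have hval : S.ret (k+1) ω = (sInf {j : ℕ | S.ret k ω < (j : ℕ∞) ∧ S.X j ω = 0} : ℕ) :=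
      hdef.trans (enat_sInf_coe hex)
    obtain ⟨hl, hz⟩ := Nat.sInf_mem hex
    have hkfin : S.ret k ω ≠ ⊤ := by
      intro htop
      rw [htop] at hl
      exact absurd hl (by simp)
    obtain ⟨hXk, hcard⟩ := ih hkfin
    have hcoe : S.ret k ω = ((S.ret k ω).toNat : ℕ∞) := (ENat.coe_toNat hkfin).symm
    have htlt : (S.ret k ω).toNat < sInf {j : ℕ | S.ret k ω < (j : ℕ∞) ∧ S.X j ω = 0} := by
      have h2 : (((S.ret k ω).toNat : ℕ) : ℕ∞)
          < ((sInf {j : ℕ | S.ret k ω < (j : ℕ∞) ∧ S.X j ω = 0} : ℕ) : ℕ∞) := by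
        rw [ENat.coe_toNat hkfin]
        exact hl
      exact Nat.cast_lt.mp h2
    have htoNat : (S.ret (k+1) ω).toNat
        = sInf {j : ℕ | S.ret k ω < (j : ℕ∞) ∧ S.X j ω = 0} := by
      rw [hval]; simp
    rw [htoNat]
    refine ⟨hz, ?_⟩
    have hins : (Finset.range (sInf {j : ℕ | S.ret k ω < (j : ℕ∞) ∧ S.X j ω = 0})).filter
          (fun j => S.X j ω = 0)
        = insert (S.ret k ω).toNat
          (((Finset.range (S.ret k ω).toNat).filter fun j => S.X j ω = 0)) := by
      ext j
      simp only [Finset.mem_filter, Finset.mem_range, Finset.mem_insert]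
      constructor
      · rintro ⟨hj, hXj⟩
        rcases lt_trichotomy j (S.ret k ω).toNat with h1 | h1 | h1
        · exact Or.inr ⟨h1, hXj⟩
        · exact Or.inl h1
        · exfalso
          have : S.ret k ω < (j : ℕ∞) := by
            rw [hcoe]
            exact_mod_cast h1
          have hle : sInf {j : ℕ | S.ret k ω < (j : ℕ∞) ∧ S.X j ω = 0} ≤ j :=
            Nat.sInf_le ⟨this, hXj⟩
          omega
      · rintro (rfl | ⟨h1, h2⟩)
        · exact ⟨htlt, hXk⟩
        · exact ⟨by omega, h2⟩
    rw [hins, Finset.card_insert_of_notMem (by simp), hcard]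

end RetLemmas



lemma measurableSet_mono {α : Type*} {m1 m2 : MeasurableSpace α} (h : m1 ≤ m2) {s : Set α}
    (hs : MeasurableSet[m1] s) : MeasurableSet[m2] s :=
  (MeasurableSpace.le_def.mp h) s hs

section Part2Aux

open MeasureTheory ProbabilityTheory

lemma measurable_countTrue (n : ℕ) : Measurable fun g : ℕ → Bool => countTrue g n := by
  induction n with
  | zero =>
    have : (fun g : ℕ → Bool => countTrue g 0) = fun _ => 0 := by
      funext g; simp [countTrue]
    rw [this]; exact measurable_const
  | succ n ih =>
    have : (fun g : ℕ → Bool => countTrue g (n + 1))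
        = fun g => countTrue g n + if g n then 1 else 0 := by
      funext g; exact ERWAux.countTrue_succ g n
    rw [this]
    have hb : Measurable fun g : ℕ → Bool => (if g n then 1 else 0 : ℕ) :=
      Measurable.comp (g := fun b : Bool => if b then 1 else 0)
        measurable_from_top (measurable_pi_apply n)
    exact ih.add hb

lemma measurable_countFalse (n : ℕ) : Measurable fun g : ℕ → Bool => countFalse g n := by
  induction n with
  | zero =>
    have : (fun g : ℕ → Bool => countFalse g 0) = fun _ => 0 := by
      funext g; simp [countFalse]
    rw [this]; exact measurable_const
  | succ n ih =>
    have : (fun g : ℕ → Bool => countFalse g (n + 1))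
        = fun g => countFalse g n + if g n then 0 else 1 := by
      funext g; exact ERWAux.countFalse_succ g n
    rw [this]
    have hb : Measurable fun g : ℕ → Bool => (if g n then 0 else 1 : ℕ) :=
      Measurable.comp (g := fun b : Bool => if b then 0 else 1)
        measurable_from_top (measurable_pi_apply n)
    exact ih.add hb

lemma measurable_sInf_pred {α : Type*} [MeasurableSpace α] {F : α → ℕ → Prop}
    (hF : ∀ m, MeasurableSet {a | F a m}) : Measurable fun a => sInf {m | F a m} := by
  apply measurable_to_countable'
  intro y
  rcases Nat.eq_zero_or_pos y with rfl | hy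
  · have hpre : (fun a => sInf {m | F a m}) ⁻¹' {0}
        = {a | F a 0} ∪ ⋂ m, {a | F a m}ᶜ := by
      ext a
      simp only [Set.mem_preimage, Set.mem_singleton_iff, Set.mem_union, Set.mem_iInter,
        Set.mem_compl_iff, Set.mem_setOf_eq]
      rw [Nat.sInf_eq_zero]
      constructor
      · rintro (h | h)
        · exact Or.inl h
        · exact Or.inr fun m hm => (Set.eq_empty_iff_forall_notMem.mp h m) hm
      · rintro (h | h)
        · exact Or.inl h
        · exact Or.inr (Set.eq_empty_iff_forall_notMem.mpr h)
    rw [hpre]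
    exact (hF 0).union (MeasurableSet.iInter fun m => (hF m).compl)
  · have hpre : (fun a => sInf {m | F a m}) ⁻¹' {y}
        = {a | F a y} ∩ ⋂ z ∈ Set.Iio y, {a | F a z}ᶜ := by
      ext a
      simp only [Set.mem_preimage, Set.mem_singleton_iff, Set.mem_inter_iff, Set.mem_iInter,
        Set.mem_Iio, Set.mem_compl_iff, Set.mem_setOf_eq]
      constructor
      · intro h
        have hex : ∃ m, F a m := by
          by_contra hne
          push_neg at hne
          have : {m | F a m} = ∅ := Set.eq_empty_iff_forall_notMem.mpr hne
          rw [this] at h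
          simp [Nat.sInf_empty] at h
          omega
        have hmem : F a (sInf {m | F a m}) := Nat.sInf_mem hex
        rw [h] at hmem
        refine ⟨hmem, fun z hz hFz => ?_⟩
        have hle : sInf {m | F a m} ≤ z := Nat.sInf_le (show z ∈ {m | F a m} from hFz)
        omega
      · rintro ⟨h1, h2⟩
        have hle : sInf {m | F a m} ≤ y := Nat.sInf_le (show y ∈ {m | F a m} from h1)
        have hmem : F a (sInf {m | F a m}) := Nat.sInf_mem (⟨y, h1⟩ : ∃ m, F a m)
        by_contra hne
        exact h2 _ (by omega) hmem
    rw [hpre]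
    exact (hF y).inter (MeasurableSet.biInter (Set.to_countable _) fun z _ => (hF z).compl)

lemma measurable_rightBP (w : ℕ) : ∀ k, Measurable fun b : ℤ → ℕ → Bool => rightBP b w k := by
  intro k
  induction k with
  | zero =>
    have : (fun b : ℤ → ℕ → Bool => rightBP b w 0) = fun _ => w := rfl
    rw [this]; exact measurable_const
  | succ k ih =>
    have heq : (fun b : ℤ → ℕ → Bool => rightBP b w (k + 1))
        = fun b => sInf {m | countFalse (b ((k : ℤ) + 1)) m = rightBP b w k} - rightBP b w k :=
      rfl
    rw [heq]
    refine Measurable.sub ?_ ih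
    apply measurable_sInf_pred
    intro m
    exact measurableSet_eq_fun
      ((measurable_countFalse m).comp (measurable_pi_apply ((k : ℤ) + 1))) ih

lemma measurable_leftBP (w : ℕ) : ∀ k, Measurable fun b : ℤ → ℕ → Bool => leftBP b w k := by
  intro k
  induction k with
  | zero =>
    have : (fun b : ℤ → ℕ → Bool => leftBP b w 0) = fun _ => w := rfl
    rw [this]; exact measurable_const
  | succ k ih =>
    have heq : (fun b : ℤ → ℕ → Bool => leftBP b w (k + 1))
        = fun b => sInf {m | countTrue (b (-((k : ℤ) + 1))) m = leftBP b w k} - leftBP b w k :=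
      rfl
    rw [heq]
    refine Measurable.sub ?_ ih
    apply measurable_sInf_pred
    intro m
    exact measurableSet_eq_fun
      ((measurable_countTrue m).comp (measurable_pi_apply (-((k : ℤ) + 1)))) ih

lemma rightBP_congr {c c' : ℤ → ℕ → Bool} (h : ∀ x : ℤ, 0 < x → c x = c' x) (w : ℕ) :
    ∀ k, rightBP c w k = rightBP c' w k := by
  intro k
  induction k with
  | zero => rfl
  | succ k ih =>
    show sInf {m | countFalse (c ((k : ℤ) + 1)) m = rightBP c w k} - rightBP c w k = _
    rw [ih, h ((k : ℤ) + 1) (by positivity)]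
    rfl

lemma leftBP_congr {c c' : ℤ → ℕ → Bool} (h : ∀ x : ℤ, x < 0 → c x = c' x) (w : ℕ) :
    ∀ k, leftBP c w k = leftBP c' w k := by
  intro k
  induction k with
  | zero => rfl
  | succ k ih =>
    show sInf {m | countTrue (c (-((k : ℤ) + 1))) m = leftBP c w k} - leftBP c w k = _
    rw [ih, h (-((k : ℤ) + 1)) (by omega)]
    rfl

lemma pi_bool_eq_generateFrom :
    (inferInstance : MeasurableSpace (ℕ → Bool))
      = MeasurableSpace.generateFrom
          {E | ∃ (J : Finset ℕ) (bv : ℕ → Bool), E = {g : ℕ → Bool | ∀ j ∈ J, g j = bv j}} := by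
  refine le_antisymm ?_ (MeasurableSpace.generateFrom_le ?_)
  · have hev : ∀ j : ℕ, @Measurable (ℕ → Bool) Bool
        (MeasurableSpace.generateFrom
          {E | ∃ (J : Finset ℕ) (bv : ℕ → Bool), E = {g : ℕ → Bool | ∀ j ∈ J, g j = bv j}}) _
        (fun g => g j) := by
      intro j t _
      have hpre : (fun g : ℕ → Bool => g j) ⁻¹' t
          = ⋃ b ∈ t, {g : ℕ → Bool | ∀ j' ∈ ({j} : Finset ℕ), g j' = b} := by
        ext g
        simp only [Set.mem_preimage, Set.mem_iUnion, Set.mem_setOf_eq, Finset.mem_singleton]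
        constructor
        · intro h
          exact ⟨g j, h, fun j' hj' => by rw [hj']⟩
        · rintro ⟨b, hb, h⟩
          rw [h j rfl]
          exact hb
      rw [hpre]
      exact MeasurableSet.biUnion (Set.to_countable _) fun b _ =>
        MeasurableSpace.measurableSet_generateFrom ⟨{j}, fun _ => b, rfl⟩
    have hid : @Measurable (ℕ → Bool) (ℕ → Bool)
        (MeasurableSpace.generateFrom
          {E | ∃ (J : Finset ℕ) (bv : ℕ → Bool), E = {g : ℕ → Bool | ∀ j ∈ J, g j = bv j}})
        inferInstance id :=
      (@measurable_pi_iff (ℕ → Bool) ℕ (fun _ => Bool)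
        (MeasurableSpace.generateFrom
          {E | ∃ (J : Finset ℕ) (bv : ℕ → Bool), E = {g : ℕ → Bool | ∀ j ∈ J, g j = bv j}})
        (fun _ => inferInstance) id).mpr fun j => hev j
    exact fun E hE => hid hE
  · rintro E ⟨J, bv, rfl⟩
    have hE : {g : ℕ → Bool | ∀ j ∈ J, g j = bv j}
        = ⋂ j ∈ (J : Set ℕ), {g : ℕ → Bool | g j = bv j} := by
      ext g; simp
    rw [hE]
    exact MeasurableSet.biInter J.countable_toSet fun j _ =>
      measurableSet_eq_fun (measurable_pi_apply j) measurable_const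

lemma integral_finset_prod_indep {Ω : Type} [MeasurableSpace Ω] {μ : Measure Ω}
    [IsProbabilityMeasure μ] {ι : Type*} (f : ι → Ω → ℝ)
    (hi : iIndepFun f μ) (hm : ∀ i, Measurable (f i)) :
    ∀ T : Finset ι, ∫ ω, ∏ i ∈ T, f i ω ∂μ = ∏ i ∈ T, ∫ ω, f i ω ∂μ := by
  intro T
  induction T using Finset.cons_induction with
  | empty => simp
  | cons a T ha ih =>
    have hind : IndepFun (f a) (∏ i ∈ T, f i) μ :=
      (hi.indepFun_finsetProd_of_notMem hm ha).symm
    have h2 : (fun ω => ∏ i ∈ T, f i ω) = (∏ i ∈ T, f i : Ω → ℝ) := by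
      funext ω; simp [Finset.prod_apply]
    have hPm : Measurable (∏ i ∈ T, f i : Ω → ℝ) := by
      rw [← h2]; exact T.measurable_prod fun i _ => hm i
    have hmul := hind.integral_mul_eq_mul_integral (hm a).aestronglyMeasurable hPm.aestronglyMeasurable
    have key : ∫ ω, f a ω * ∏ i ∈ T, f i ω ∂μ
        = (∫ ω, f a ω ∂μ) * ∫ ω, ∏ i ∈ T, f i ω ∂μ := by
      have h1 : (fun ω => f a ω * ∏ i ∈ T, f i ω) = f a * ∏ i ∈ T, f i := by
        funext ω; simp [Finset.prod_apply]
      rw [h1, h2]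
      exact hmul
    simp only [Finset.prod_cons]
    rw [key, ih]

namespace ERWPart2

variable (S : ERWSetup)

lemma measurable_Bx (x : ℤ) : Measurable fun ω => S.B ω x :=
  (measurable_pi_apply x).comp S.meas_B

lemma measurable_Bxj (x : ℤ) (j : ℕ) : Measurable fun ω => S.B ω x j :=
  (measurable_pi_apply j).comp (measurable_Bx S x)

lemma measurableSet_cyl (s : Finset (ℤ × ℕ)) (bv : ℤ × ℕ → Bool) :
    MeasurableSet {ω | ∀ p ∈ s, S.B ω p.1 p.2 = bv p} := by
  have h : {ω | ∀ p ∈ s, S.B ω p.1 p.2 = bv p}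
      = ⋂ p ∈ (s : Set (ℤ × ℕ)), {ω | S.B ω p.1 p.2 = bv p} := by
    ext ω; simp
  rw [h]
  exact MeasurableSet.biInter s.countable_toSet fun p _ =>
    measurableSet_eq_fun (measurable_Bxj S p.1 p.2) measurable_const

lemma toReal_meas_cyl (s : Finset (ℤ × ℕ)) (bv : ℤ × ℕ → Bool) :
    (S.μ {ω | ∀ p ∈ s, S.B ω p.1 p.2 = bv p}).toReal
      = ∫ ω, ∏ p ∈ s, (if bv p then S.cookie ω p.1 p.2 else 1 - S.cookie ω p.1 p.2) ∂S.μ := by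
  haveI := S.isProb
  have hm : MeasurableSpace.comap S.cookie inferInstance ≤ S.mΩ := S.meas_cookie.comap_le
  have hind : (fun ω => if ∀ p ∈ s, S.B ω p.1 p.2 = bv p then (1 : ℝ) else 0)
      = ({ω | ∀ p ∈ s, S.B ω p.1 p.2 = bv p} : Set S.Ω).indicator (fun _ => (1 : ℝ)) := by
    funext ω
    by_cases h : ∀ p ∈ s, S.B ω p.1 p.2 = bv p
    · rw [Set.indicator_of_mem (show ω ∈ {ω | ∀ p ∈ s, S.B ω p.1 p.2 = bv p} from h), if_pos h]
    · rw [Set.indicator_of_notMem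
        (show ω ∉ {ω | ∀ p ∈ s, S.B ω p.1 p.2 = bv p} from h), if_neg h]
  calc (S.μ {ω | ∀ p ∈ s, S.B ω p.1 p.2 = bv p}).toReal
      = ∫ ω, ({ω | ∀ p ∈ s, S.B ω p.1 p.2 = bv p} : Set S.Ω).indicator
          (fun _ => (1 : ℝ)) ω ∂S.μ := by
        rw [integral_indicator_const (1 : ℝ) (measurableSet_cyl S s bv)]
        simp [Measure.real]
    _ = ∫ ω, (fun ω => if ∀ p ∈ s, S.B ω p.1 p.2 = bv p then (1 : ℝ) else 0) ω ∂S.μ := by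
        rw [hind]
    _ = ∫ ω, (condExp (MeasurableSpace.comap S.cookie inferInstance) S.μ
          (fun ω => if ∀ p ∈ s, S.B ω p.1 p.2 = bv p then (1 : ℝ) else 0)) ω ∂S.μ :=
        (integral_condExp hm).symm
    _ = _ := integral_congr_ae (S.condB s bv)

lemma meas_cyl_sites (T : Finset ℤ) (J : ℤ → Finset ℕ) (bv : ℤ → ℕ → Bool) :
    S.μ (⋂ x ∈ T, {ω | ∀ j ∈ J x, S.B ω x j = bv x j})
      = ∏ x ∈ T, S.μ {ω | ∀ j ∈ J x, S.B ω x j = bv x j} := by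
  haveI := S.isProb
  classical
  have hsite : ∀ x : ℤ, {ω | ∀ j ∈ J x, S.B ω x j = bv x j}
      = {ω | ∀ p ∈ (J x).image (fun j => ((x, j) : ℤ × ℕ)), S.B ω p.1 p.2 = bv p.1 p.2} := by
    intro x; ext ω
    simp only [Set.mem_setOf_eq, Finset.mem_image]
    constructor
    · rintro h p ⟨j, hj, rfl⟩; exact h j hj
    · intro h j hj; exact h (x, j) ⟨j, hj, rfl⟩
  have hinter : (⋂ x ∈ T, {ω | ∀ j ∈ J x, S.B ω x j = bv x j})
      = {ω | ∀ p ∈ T.biUnion (fun x => (J x).image (fun j => ((x, j) : ℤ × ℕ))),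
          S.B ω p.1 p.2 = bv p.1 p.2} := by
    ext ω
    simp only [Set.mem_iInter, Set.mem_setOf_eq, Finset.mem_biUnion, Finset.mem_image]
    constructor
    · rintro h p ⟨x, hx, j, hj, rfl⟩; exact h x hx j hj
    · intro h x hx j hj; exact h (x, j) ⟨x, hx, j, hj, rfl⟩
  have hg : ∀ x : ℤ,
      Measurable fun h : ℕ → ℝ => ∏ j ∈ J x, (if bv x j then h j else 1 - h j) := by
    intro x
    apply Finset.measurable_prod
    intro j _
    cases hb : bv x j
    · simp only [hb, Bool.false_eq_true, if_false]; fun_prop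
    · simpa [hb] using (measurable_pi_apply j)
  have hiind : iIndepFun
      (fun x ω => ∏ j ∈ J x, (if bv x j then S.cookie ω x j else 1 - S.cookie ω x j)) S.μ :=
    S.A2_indep.comp (fun x (h : ℕ → ℝ) => ∏ j ∈ J x, (if bv x j then h j else 1 - h j)) hg
  have hmeas : ∀ x : ℤ,
      Measurable fun ω => ∏ j ∈ J x, (if bv x j then S.cookie ω x j else 1 - S.cookie ω x j) :=
    fun x => (hg x).comp ((measurable_pi_apply x).comp S.meas_cookie)
  have hdisj : (↑T : Set ℤ).PairwiseDisjoint
      (fun x => (J x).image (fun j => ((x, j) : ℤ × ℕ))) := by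
    intro x _ y _ hxy
    simp only [Function.onFun, Finset.disjoint_left, Finset.mem_image]
    rintro p ⟨j, hj, rfl⟩ ⟨j', hj', hpe⟩
    exact hxy (congrArg Prod.fst hpe).symm
  have hprod : ∀ ω, (∏ p ∈ T.biUnion (fun x => (J x).image (fun j => ((x, j) : ℤ × ℕ))),
        (if bv p.1 p.2 then S.cookie ω p.1 p.2 else 1 - S.cookie ω p.1 p.2))
      = ∏ x ∈ T, ∏ j ∈ J x, (if bv x j then S.cookie ω x j else 1 - S.cookie ω x j) := by
    intro ω
    rw [Finset.prod_biUnion hdisj]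
    refine Finset.prod_congr rfl fun x _ => ?_
    beta_reduce
    rw [Finset.prod_image fun j _ j' _ h => congrArg Prod.snd h]
  have hR : ∀ x ∈ T, (S.μ {ω | ∀ j ∈ J x, S.B ω x j = bv x j}).toReal
      = ∫ ω, ∏ j ∈ J x, (if bv x j then S.cookie ω x j else 1 - S.cookie ω x j) ∂S.μ := by
    intro x _
    rw [hsite x, toReal_meas_cyl]
    refine integral_congr_ae (Filter.Eventually.of_forall fun ω => ?_)
    beta_reduce
    rw [Finset.prod_image fun j _ j' _ h => congrArg Prod.snd h]
  have htoReal : (S.μ (⋂ x ∈ T, {ω | ∀ j ∈ J x, S.B ω x j = bv x j})).toReal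
      = ∏ x ∈ T, (S.μ {ω | ∀ j ∈ J x, S.B ω x j = bv x j}).toReal := by
    rw [hinter, toReal_meas_cyl]
    rw [integral_congr_ae (Filter.Eventually.of_forall hprod)]
    rw [integral_finset_prod_indep _ hiind hmeas T]
    exact Finset.prod_congr rfl fun x hx => (hR x hx).symm
  have h2 : (S.μ (⋂ x ∈ T, {ω | ∀ j ∈ J x, S.B ω x j = bv x j})).toReal
      = (∏ x ∈ T, S.μ {ω | ∀ j ∈ J x, S.B ω x j = bv x j}).toReal := by
    rw [htoReal, ENNReal.toReal_prod]
  exact (ENNReal.toReal_eq_toReal_iff' (measure_ne_top _ _)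
    (ENNReal.prod_ne_top fun x _ => measure_ne_top _ _)).mp h2

def siteAlg (x : ℤ) : MeasurableSpace S.Ω :=
  MeasurableSpace.comap (fun ω => S.B ω x) inferInstance

def sitePi (x : ℤ) : Set (Set S.Ω) :=
  {E | ∃ (J : Finset ℕ) (bv : ℕ → Bool), E = {ω | ∀ j ∈ J, S.B ω x j = bv j}}

lemma siteAlg_le (x : ℤ) : siteAlg S x ≤ S.mΩ := (measurable_Bx S x).comap_le

lemma isPiSystem_sitePi (x : ℤ) : IsPiSystem (sitePi S x) := by
  rintro E1 ⟨J1, bv1, rfl⟩ E2 ⟨J2, bv2, rfl⟩ hne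
  obtain ⟨ω0, h01, h02⟩ := hne
  refine ⟨J1 ∪ J2, fun j => if j ∈ J1 then bv1 j else bv2 j, ?_⟩
  ext ω
  simp only [Set.mem_inter_iff, Set.mem_setOf_eq, Finset.mem_union]
  constructor
  · rintro ⟨h1, h2⟩ j hj
    by_cases hj1 : j ∈ J1
    · rw [if_pos hj1]; exact h1 j hj1
    · rw [if_neg hj1]
      exact h2 j (by tauto)
  · intro h
    constructor
    · intro j hj
      have := h j (Or.inl hj)
      rwa [if_pos hj] at this
    · intro j hj
      by_cases hj1 : j ∈ J1
      · have := h j (Or.inl hj1)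
        rw [if_pos hj1] at this
        rw [this, ← h01 j hj1, h02 j hj]
      · have := h j (Or.inr hj)
        rwa [if_neg hj1] at this

lemma siteAlg_eq_generateFrom (x : ℤ) :
    siteAlg S x = MeasurableSpace.generateFrom (sitePi S x) := by
  unfold siteAlg
  rw [show (inferInstance : MeasurableSpace (ℕ → Bool)) = _ from pi_bool_eq_generateFrom]
  rw [MeasurableSpace.comap_generateFrom]
  congr 1
  ext E
  simp only [Set.mem_image, Set.mem_setOf_eq, sitePi]
  constructor
  · rintro ⟨E', ⟨J, bv, rfl⟩, rfl⟩
    exact ⟨J, bv, rfl⟩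
  · rintro ⟨J, bv, rfl⟩
    exact ⟨{g | ∀ j ∈ J, g j = bv j}, ⟨J, bv, rfl⟩, rfl⟩

lemma iIndep_siteAlg : iIndep (siteAlg S) S.μ := by
  haveI := S.isProb
  refine iIndepSets.iIndep (siteAlg_le S) (sitePi S) (isPiSystem_sitePi S)
    (siteAlg_eq_generateFrom S) ?_
  rw [iIndepSets_iff]
  intro T f hf
  classical
  choose J bv hfe using hf
  have hfe' : ∀ x ∈ T, f x = {ω | ∀ j ∈ (if hx : x ∈ T then J x hx else ∅),
      S.B ω x j = (if hx : x ∈ T then bv x hx else fun _ => true) j} := by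
    intro x hx
    simp only [dif_pos hx]
    exact hfe x hx
  calc S.μ (⋂ x ∈ T, f x)
      = S.μ (⋂ x ∈ T, {ω | ∀ j ∈ (if hx : x ∈ T then J x hx else ∅),
          S.B ω x j = (if hx : x ∈ T then bv x hx else fun _ => true) j}) := by
        congr 1
        exact Set.iInter₂_congr hfe'
    _ = ∏ x ∈ T, S.μ {ω | ∀ j ∈ (if hx : x ∈ T then J x hx else ∅),
          S.B ω x j = (if hx : x ∈ T then bv x hx else fun _ => true) j} :=
        meas_cyl_sites S T _ _
    _ = ∏ x ∈ T, S.μ (f x) := Finset.prod_congr rfl fun x hx => by rw [← hfe' x hx]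

lemma measurableSet_rightBP_event (m : ℕ) (A : Set (ℕ → ℕ)) (hA : MeasurableSet A) :
    MeasurableSet[⨆ x ∈ {x : ℤ | 0 < x}, siteAlg S x]
      {ω | (fun i => rightBP (S.B ω) m (i + 1)) ∈ A} := by
  have hΦ : @Measurable S.Ω (ℤ → ℕ → Bool) (⨆ x ∈ {x : ℤ | 0 < x}, siteAlg S x) _
      (fun ω x => if 0 < x then S.B ω x else fun _ => false) := by
    refine (@measurable_pi_iff S.Ω ℤ (fun _ => ℕ → Bool)
      (⨆ x ∈ {x : ℤ | 0 < x}, siteAlg S x) (fun _ => inferInstance) _).mpr fun x => ?_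
    by_cases hx : 0 < x
    · simp only [if_pos hx]
      have h1 : @Measurable S.Ω (ℕ → Bool) (siteAlg S x) _ (fun ω => S.B ω x) :=
        Measurable.of_comap_le le_rfl
      exact h1.mono (le_biSup _ hx) le_rfl
    · simp only [if_neg hx]
      exact measurable_const
  have hΨ : Measurable fun b : ℤ → ℕ → Bool => (fun i => rightBP b m (i + 1)) :=
    measurable_pi_lambda _ fun i => measurable_rightBP m (i + 1)
  have hG : {ω | (fun i => rightBP (S.B ω) m (i + 1)) ∈ A}
      = (fun ω (x : ℤ) => if 0 < x then S.B ω x else fun _ => false) ⁻¹'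
        {b | (fun i => rightBP b m (i + 1)) ∈ A} := by
    ext ω
    simp only [Set.mem_preimage, Set.mem_setOf_eq]
    have hc : ∀ k, rightBP (S.B ω) m k
        = rightBP (fun x => if 0 < x then S.B ω x else fun _ => false) m k :=
      rightBP_congr (fun x hx => by rw [if_pos hx]) m
    have hfun : (fun i => rightBP (S.B ω) m (i + 1))
        = fun i => rightBP (fun x => if 0 < x then S.B ω x else fun _ => false) m (i + 1) :=
      funext fun i => hc (i + 1)
    rw [hfun]
  rw [hG]
  exact hΦ (hΨ hA)

lemma measurableSet_leftBP_event (m : ℕ) (A : Set (ℕ → ℕ)) (hA : MeasurableSet A) :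
    MeasurableSet[⨆ x ∈ {x : ℤ | x < 0}, siteAlg S x]
      {ω | (fun i => leftBP (S.B ω) m (i + 1)) ∈ A} := by
  have hΦ : @Measurable S.Ω (ℤ → ℕ → Bool) (⨆ x ∈ {x : ℤ | x < 0}, siteAlg S x) _
      (fun ω x => if x < 0 then S.B ω x else fun _ => false) := by
    refine (@measurable_pi_iff S.Ω ℤ (fun _ => ℕ → Bool)
      (⨆ x ∈ {x : ℤ | x < 0}, siteAlg S x) (fun _ => inferInstance) _).mpr fun x => ?_
    by_cases hx : x < 0
    · simp only [if_pos hx]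
      have h1 : @Measurable S.Ω (ℕ → Bool) (siteAlg S x) _ (fun ω => S.B ω x) :=
        Measurable.of_comap_le le_rfl
      exact h1.mono (le_biSup _ hx) le_rfl
    · simp only [if_neg hx]
      exact measurable_const
  have hΨ : Measurable fun b : ℤ → ℕ → Bool => (fun i => leftBP b m (i + 1)) :=
    measurable_pi_lambda _ fun i => measurable_leftBP m (i + 1)
  have hG : {ω | (fun i => leftBP (S.B ω) m (i + 1)) ∈ A}
      = (fun ω (x : ℤ) => if x < 0 then S.B ω x else fun _ => false) ⁻¹'
        {b | (fun i => leftBP b m (i + 1)) ∈ A} := by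
    ext ω
    simp only [Set.mem_preimage, Set.mem_setOf_eq]
    have hc : ∀ k, leftBP (S.B ω) m k
        = leftBP (fun x => if x < 0 then S.B ω x else fun _ => false) m k :=
      leftBP_congr (fun x hx => by rw [if_pos hx]) m
    have hfun : (fun i => leftBP (S.B ω) m (i + 1))
        = fun i => leftBP (fun x => if x < 0 then S.B ω x else fun _ => false) m (i + 1) :=
      funext fun i => hc (i + 1)
    rw [hfun]
  rw [hG]
  exact hΦ (hΨ hA)

lemma measurableSet_R_event (n m : ℕ) :
    MeasurableSet[siteAlg S 0] {ω | S.R n ω = m} := by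
  refine ⟨{g : ℕ → Bool | countTrue g n = m}, ?_, rfl⟩
  exact measurableSet_eq_fun (measurable_countTrue n) measurable_const

end ERWPart2

end Part2Aux

/-- **Lemma 2.2 (correspondence between the walk and the forward branching processes).**
With the random initial conditions `W_0 = R_n` and `Z_0 = n - R_n`, on the event
`{ρ_n < ∞}` one has `W_i = U_i^{ρ_n}` and `Z_i = D_{-i}^{ρ_n}` for all `i ≥ 0`; moreover
`(W_i)_{i ≥ 1}` and `(Z_i)_{i ≥ 1}` are conditionally independent given `(W_0, Z_0)`
(equivalently, given the discrete random variable `R_n`, since `W_0 = R_n`, `Z_0 = n - R_n`). -/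
theorem forward_bp_correspondence (S : ERWSetup) (n : ℕ) (hn : 1 ≤ n) :
    (∀ᵐ ω ∂S.μ, S.ret n ω < ⊤ →
      ∀ i : ℕ, rightBP (S.B ω) (S.R n ω) i = S.U (i : ℤ) (S.ret n ω).toNat ω ∧
        leftBP (S.B ω) (n - S.R n ω) i = S.D (-(i : ℤ)) (S.ret n ω).toNat ω) ∧
    (∀ m : ℕ, ∀ A A' : Set (ℕ → ℕ), MeasurableSet A → MeasurableSet A' →
      S.μ {ω | (fun i => rightBP (S.B ω) (S.R n ω) (i + 1)) ∈ A ∧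
            (fun i => leftBP (S.B ω) (n - S.R n ω) (i + 1)) ∈ A' ∧ S.R n ω = m} *
          S.μ {ω | S.R n ω = m}
        = S.μ {ω | (fun i => rightBP (S.B ω) (S.R n ω) (i + 1)) ∈ A ∧ S.R n ω = m} *
          S.μ {ω | (fun i => leftBP (S.B ω) (n - S.R n ω) (i + 1)) ∈ A' ∧ S.R n ω = m}) := by
  constructor
  · refine MeasureTheory.ae_of_all _ ?_
    intro ω hfin i
    have hne : S.ret n ω ≠ ⊤ := hfin.ne
    have hY0 : S.X 0 ω = 0 := S.X_zero ω
    have hs : ERWAux.Steps (S.B ω) (fun k => S.X k ω) := by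
      intro k
      have hcard : ((Finset.range (k+1)).filter fun j => S.X j ω = S.X k ω).card
          = ERWAux.pv (fun t => S.X t ω) (S.X k ω) k + 1 := by
        have h2 := ERWAux.pv_succ (fun t => S.X t ω) (S.X k ω) k
        rw [if_pos rfl] at h2
        rw [← h2]
        rfl
      have h := S.X_step ω k
      rw [hcard, Nat.add_sub_cancel] at h
      exact h
    obtain ⟨hXN, hzeros⟩ := ret_spec S ω n hne
    have hzeros' : ERWAux.pv (fun k => S.X k ω) 0 (S.ret n ω).toNat = n := hzeros
    have hR : S.R n ω = ERWAux.pu (fun k => S.X k ω) 0 (S.ret n ω).toNat := by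
      show countTrue (S.B ω 0) n = _
      rw [(ERWAux.counts_eq hs (S.ret n ω).toNat (0 : ℤ)).1, hzeros']
    have hD0 : n - S.R n ω = ERWAux.pd (fun k => S.X k ω) 0 (S.ret n ω).toNat := by
      rw [(ERWAux.counts_eq hs (S.ret n ω).toNat (0 : ℤ)).2, hzeros']
      show n - countTrue (S.B ω 0) n = _
      have := ERWAux.countTrue_add_countFalse (S.B ω 0) n
      omega
    constructor
    · rw [hR, ERWAux.rightBP_eq hY0 hs (S.ret n ω).toNat hXN i]
      rfl
    · rw [hD0, ERWAux.leftBP_eq hY0 hs (S.ret n ω).toNat hXN i]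
      rfl
  · intro m A A' hA hA'
    haveI := S.isProb
    have hle := ERWPart2.siteAlg_le S
    have hInd := ERWPart2.iIndep_siteAlg S
    have hPos := ERWPart2.measurableSet_rightBP_event S m A hA
    have hNeg := ERWPart2.measurableSet_leftBP_event S (n - m) A' hA'
    have hZero := ERWPart2.measurableSet_R_event S n m
    have hE1 : {ω | (fun i => rightBP (S.B ω) (S.R n ω) (i + 1)) ∈ A ∧
          (fun i => leftBP (S.B ω) (n - S.R n ω) (i + 1)) ∈ A' ∧ S.R n ω = m}
        = ({ω | (fun i => rightBP (S.B ω) m (i + 1)) ∈ A}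
            ∩ {ω | (fun i => leftBP (S.B ω) (n - m) (i + 1)) ∈ A'}) ∩ {ω | S.R n ω = m} := by
      ext ω
      simp only [Set.mem_setOf_eq, Set.mem_inter_iff]
      constructor
      · rintro ⟨h1, h2, h3⟩
        rw [h3] at h1 h2
        exact ⟨⟨h1, h2⟩, h3⟩
      · rintro ⟨⟨h1, h2⟩, h3⟩
        rw [← h3] at h1 h2
        exact ⟨h1, h2, h3⟩
    have hE2 : {ω | (fun i => rightBP (S.B ω) (S.R n ω) (i + 1)) ∈ A ∧ S.R n ω = m}
        = {ω | (fun i => rightBP (S.B ω) m (i + 1)) ∈ A} ∩ {ω | S.R n ω = m} := by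
      ext ω
      simp only [Set.mem_setOf_eq, Set.mem_inter_iff]
      constructor
      · rintro ⟨h1, h3⟩; rw [h3] at h1; exact ⟨h1, h3⟩
      · rintro ⟨h1, h3⟩; rw [← h3] at h1; exact ⟨h1, h3⟩
    have hE3 : {ω | (fun i => leftBP (S.B ω) (n - S.R n ω) (i + 1)) ∈ A' ∧ S.R n ω = m}
        = {ω | (fun i => leftBP (S.B ω) (n - m) (i + 1)) ∈ A'} ∩ {ω | S.R n ω = m} := by
      ext ω
      simp only [Set.mem_setOf_eq, Set.mem_inter_iff]
      constructor
      · rintro ⟨h1, h3⟩; rw [h3] at h1; exact ⟨h1, h3⟩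
      · rintro ⟨h1, h3⟩; rw [← h3] at h1; exact ⟨h1, h3⟩
    have hd1 : Disjoint {x : ℤ | 0 < x} ({x : ℤ | x < 0} ∪ {(0 : ℤ)}) := by
      rw [Set.disjoint_left]
      rintro x hx (hx' | hx')
      · simp only [Set.mem_setOf_eq] at hx hx'; omega
      · simp only [Set.mem_setOf_eq] at hx
        simp only [Set.mem_singleton_iff] at hx'
        omega
    have hd2 : Disjoint {x : ℤ | x < 0} ({(0 : ℤ)} : Set ℤ) := by
      rw [Set.disjoint_left]
      intro x hx hx'
      simp only [Set.mem_setOf_eq] at hx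
      simp only [Set.mem_singleton_iff] at hx'
      omega
    have hd3 : Disjoint {x : ℤ | 0 < x} ({(0 : ℤ)} : Set ℤ) := by
      rw [Set.disjoint_left]
      intro x hx hx'
      simp only [Set.mem_setOf_eq] at hx
      simp only [Set.mem_singleton_iff] at hx'
      omega
    have I1 := indep_iSup_of_disjoint hle hInd hd1
    have I2 := indep_iSup_of_disjoint hle hInd hd2
    have I3 := indep_iSup_of_disjoint hle hInd hd3
    have hZero1 : MeasurableSet[⨆ x ∈ ({(0 : ℤ)} : Set ℤ), ERWPart2.siteAlg S x]
        {ω | S.R n ω = m} :=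
      measurableSet_mono (le_biSup (fun x => ERWPart2.siteAlg S x)
        (Set.mem_singleton (0 : ℤ))) hZero
    have hNeg2 : MeasurableSet[⨆ x ∈ ({x : ℤ | x < 0} ∪ {(0 : ℤ)} : Set ℤ),
        ERWPart2.siteAlg S x] {ω | (fun i => leftBP (S.B ω) (n - m) (i + 1)) ∈ A'} :=
      measurableSet_mono
        (biSup_mono fun x (hx : x ∈ {x : ℤ | x < 0}) => Set.mem_union_left _ hx) hNeg
    have hZero2 : MeasurableSet[⨆ x ∈ ({x : ℤ | x < 0} ∪ {(0 : ℤ)} : Set ℤ),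
        ERWPart2.siteAlg S x] {ω | S.R n ω = m} :=
      measurableSet_mono
        (biSup_mono fun x (hx : x ∈ ({(0 : ℤ)} : Set ℤ)) => Set.mem_union_right _ hx) hZero1
    have hmul1 : S.μ ({ω | (fun i => rightBP (S.B ω) m (i + 1)) ∈ A}
          ∩ ({ω | (fun i => leftBP (S.B ω) (n - m) (i + 1)) ∈ A'} ∩ {ω | S.R n ω = m}))
        = S.μ {ω | (fun i => rightBP (S.B ω) m (i + 1)) ∈ A}
          * S.μ ({ω | (fun i => leftBP (S.B ω) (n - m) (i + 1)) ∈ A'} ∩ {ω | S.R n ω = m}) :=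
      (Indep_iff _ _ _).mp I1 _ _ hPos (hNeg2.inter hZero2)
    have hmul2 : S.μ ({ω | (fun i => leftBP (S.B ω) (n - m) (i + 1)) ∈ A'} ∩ {ω | S.R n ω = m})
        = S.μ {ω | (fun i => leftBP (S.B ω) (n - m) (i + 1)) ∈ A'} * S.μ {ω | S.R n ω = m} :=
      (Indep_iff _ _ _).mp I2 _ _ hNeg hZero1
    have hmul3 : S.μ ({ω | (fun i => rightBP (S.B ω) m (i + 1)) ∈ A} ∩ {ω | S.R n ω = m})
        = S.μ {ω | (fun i => rightBP (S.B ω) m (i + 1)) ∈ A} * S.μ {ω | S.R n ω = m} :=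
      (Indep_iff _ _ _).mp I3 _ _ hPos hZero1
    rw [hE1, hE2, hE3, Set.inter_assoc, hmul1, hmul2, hmul3]
    ring
end
end

section
/- Let ξ₁, ξ₂, ξ₃, … be i.i.d. non-negative random variables with P(ξ₁ > t) ~ C₀·t^{−α} as t → ∞ for some C₀ > 0 and α > 0. If 0 < γ < min(α, 1), then for any x > 0, P(Σ_{i=1}^{⌊n^γ⌋} ξ_i > x·n) ~ C₀·x^{−α}·n^{γ−α} as n → ∞. -/
open Filter Finset
open scoped ENNReal NNReal

noncomputable section

open MeasureTheory ProbabilityTheory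

open MeasureTheory ProbabilityTheory

section AuxHeavyTail
open Real Set
set_option maxHeartbeats 2000000

lemma aux_pow_lb (p : ℝ) (hp0 : 0 ≤ p) (hp1 : p ≤ 1) :
    ∀ m : ℕ, (m : ℝ) * p - ((m : ℝ) * p) ^ 2 ≤ 1 - (1 - p) ^ m := by
  intro m
  induction m with
  | zero => simp
  | succ m ih =>
    have hbern : 1 - (m : ℝ) * p ≤ (1 - p) ^ m := by
      have := one_add_mul_le_pow (a := -p) (by linarith) m
      simpa [sub_eq_add_neg, mul_comm] using this
    have hpow0 : (0:ℝ) ≤ (1 - p) ^ m := pow_nonneg (by linarith) m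
    have key : (1 - p) ^ (m+1) = (1-p)^m - p * (1-p)^m := by ring
    have h2 : p * (1 - (m:ℝ)*p) ≤ p * (1-p)^m := by
      exact mul_le_mul_of_nonneg_left hbern hp0
    push_cast
    nlinarith [sq_nonneg ((m:ℝ)*p), sq_nonneg p, mul_nonneg (Nat.cast_nonneg m : (0:ℝ) ≤ m) hp0]

lemma aux_exp_le (y Y : ℝ) (h0 : 0 ≤ y) (hY : y ≤ Y) : Real.exp y ≤ 1 + y * Real.exp Y := by
  have h1 : 1 - y ≤ Real.exp (-y) := by
    have := Real.add_one_le_exp (-y); linarith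
  have h2 : (1 - y) * Real.exp y ≤ Real.exp (-y) * Real.exp y :=
    mul_le_mul_of_nonneg_right h1 (Real.exp_pos y).le
  rw [← Real.exp_add, neg_add_cancel, Real.exp_zero] at h2
  have h3 : Real.exp y ≤ 1 + y * Real.exp y := by nlinarith
  have h4 : y * Real.exp y ≤ y * Real.exp Y :=
    mul_le_mul_of_nonneg_left (Real.exp_le_exp.2 hY) h0
  linarith

lemma aux_one_add_pow_le (v : ℝ) (hv : 0 ≤ v) (m : ℕ) :
    (1 + v) ^ m ≤ Real.exp ((m : ℝ) * v) := by
  calc (1 + v) ^ m ≤ (Real.exp v) ^ m := by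
        have : 1 + v ≤ Real.exp v := by have := Real.add_one_le_exp v; linarith
        exact pow_le_pow_left₀ (by linarith) this m
      _ = Real.exp ((m : ℝ) * v) := by rw [← Real.exp_nat_mul]

lemma aux_trunc_moment {Ω : Type} [MeasurableSpace Ω] (μ : Measure Ω) [IsProbabilityMeasure μ]
    (f : Ω → ℝ) (hf : Measurable f) (hnn : ∀ ω, 0 ≤ f ω)
    (α' c t : ℝ) (hα'0 : 0 < α') (hα'1 : α' < 1) (hc : 0 ≤ c) (ht : 0 < t)
    (hp : ∀ s : ℝ, 0 < s → s ≤ t → (μ {ω | s < f ω}).toReal ≤ c * s ^ (-α')) :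
    ∫ ω, min (f ω) t ∂μ ≤ c / (1 - α') * t ^ (1 - α') := by
  set F : Ω → ℝ := fun ω => min (f ω) t with hF
  have hFmeas : Measurable F := hf.min measurable_const
  have hFnn : ∀ ω, 0 ≤ F ω := fun ω => le_min (hnn ω) ht.le
  have hFle : ∀ ω, F ω ≤ t := fun ω => min_le_right _ _
  have hFint : Integrable F μ := by
    refine ⟨hFmeas.aestronglyMeasurable, ?_⟩
    apply HasFiniteIntegral.of_bounded (C := t)
    exact Eventually.of_forall fun ω => by
      rw [Real.norm_eq_abs, abs_of_nonneg (hFnn ω)]; exact hFle ω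
  rw [hFint.integral_eq_integral_meas_lt (Eventually.of_forall hFnn)]
  set g : ℝ → ℝ := fun s => (μ {a | s < F a}).toReal with hg
  have hganti : Antitone fun s => μ {a | s < F a} :=
    fun s₁ s₂ hs => measure_mono fun a ha => lt_of_le_of_lt hs ha
  have hgmeas : Measurable g := hganti.measurable.ennreal_toReal
  have hg0 : ∀ s, 0 ≤ g s := fun s => ENNReal.toReal_nonneg
  have hg1 : ∀ s, g s ≤ 1 := fun s => by
    rw [hg]
    simp only
    rw [← ENNReal.toReal_one]
    exact ENNReal.toReal_mono (by simp) prob_le_one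
  have hgzero : ∀ s, t < s → g s = 0 := by
    intro s hs
    have : {a | s < F a} = ∅ := by
      ext a; simp only [mem_setOf_eq, mem_empty_iff_false, iff_false, not_lt]
      exact (hFle a).trans hs.le
    simp [hg, this]
  -- split the integral
  have hsplit : Ioi (0:ℝ) = Ioc 0 t ∪ Ioi t := (Ioc_union_Ioi_eq_Ioi ht.le).symm
  have hint1 : IntegrableOn g (Ioc 0 t) := by
    refine Measure.integrableOn_of_bounded (by simp) hgmeas.aestronglyMeasurable (M := 1) ?_
    exact Eventually.of_forall fun s => by
      rw [Real.norm_eq_abs, abs_of_nonneg (hg0 s)]; exact hg1 s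
  have hint2 : IntegrableOn g (Ioi t) := by
    apply (integrableOn_congr_fun (f := fun _ => (0:ℝ)) ?_ measurableSet_Ioi).mp
    · exact integrableOn_zero
    · intro s hs; exact (hgzero s hs).symm
  have h2zero : ∫ s in Ioi t, g s = 0 := by
    rw [setIntegral_congr_fun measurableSet_Ioi (fun s hs => hgzero s hs)]
    simp
  have hrint : IntegrableOn (fun s : ℝ => c * s ^ (-α')) (Ioc 0 t) := by
    have : IntervalIntegrable (fun s : ℝ => s ^ (-α')) volume 0 t :=
      intervalIntegral.intervalIntegrable_rpow' (by linarith)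
    exact ((intervalIntegrable_iff_integrableOn_Ioc_of_le ht.le).mp this).const_mul c
  have hcomp : ∫ s in Ioc 0 t, g s ≤ ∫ s in Ioc 0 t, c * s ^ (-α') := by
    refine setIntegral_mono_on hint1 hrint measurableSet_Ioc ?_
    intro s hs
    calc g s ≤ (μ {ω | s < f ω}).toReal := by
          apply ENNReal.toReal_mono (measure_ne_top _ _)
          apply measure_mono
          intro a ha
          exact lt_of_lt_of_le ha (min_le_left (f a) t)
      _ ≤ c * s ^ (-α') := hp s hs.1 hs.2
  have hval : ∫ s in Ioc 0 t, c * s ^ (-α') = c / (1 - α') * t ^ (1 - α') := by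
    rw [integral_const_mul, ← intervalIntegral.integral_of_le ht.le,
      integral_rpow (Or.inl (by linarith))]
    rw [Real.zero_rpow (by linarith : -α' + 1 ≠ 0)]
    rw [show -α' + 1 = 1 - α' by ring]
    ring
  calc ∫ s in Ioi (0:ℝ), g s = (∫ s in Ioc 0 t, g s) + ∫ s in Ioi t, g s := by
        rw [hsplit]
        exact setIntegral_union (Ioc_disjoint_Ioi le_rfl) measurableSet_Ioi hint1 hint2
    _ ≤ c / (1 - α') * t ^ (1 - α') := by
        rw [h2zero, add_zero]; exact hcomp.trans hval.le

lemma aux_inclusion (M : ℕ) (v : ℕ → ℝ) (hv : ∀ i, 0 ≤ v i) (x ε δ : ℝ)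
    (hx : 0 ≤ x) (hδx : 0 ≤ δ * x) (hε1 : ε ≤ 1)
    (hA : ∀ i ∈ Finset.range M, v i ≤ (1 - ε) * x)
    (hB : ¬ ∃ i ∈ Finset.range M, ∃ j ∈ Finset.range M, i ≠ j ∧ δ * x < v i ∧ δ * x < v j)
    (hS : x < ∑ i ∈ Finset.range M, v i) :
    ε * x < ∑ i ∈ Finset.range M, min (v i) (δ * x) := by
  by_cases hex : ∃ i₀ ∈ Finset.range M, δ * x < v i₀
  · obtain ⟨i₀, hi₀, hvi₀⟩ := hex
    have hsmall : ∀ j ∈ Finset.range M, j ≠ i₀ → v j ≤ δ * x := by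
      intro j hj hne
      by_contra hlt
      exact hB ⟨j, hj, i₀, hi₀, hne, lt_of_not_ge hlt, hvi₀⟩
    have h1 : ∑ j ∈ (Finset.range M).erase i₀, v j
        = ∑ j ∈ (Finset.range M).erase i₀, min (v j) (δ * x) := by
      apply Finset.sum_congr rfl
      intro j hj
      exact (min_eq_left (hsmall j (Finset.mem_of_mem_erase hj)
        (Finset.ne_of_mem_erase hj))).symm
    have h2 : ∑ j ∈ (Finset.range M).erase i₀, min (v j) (δ * x)
        ≤ ∑ i ∈ Finset.range M, min (v i) (δ * x) := by
      apply Finset.sum_le_sum_of_subset_of_nonneg (Finset.erase_subset _ _)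
      intro i _ _
      exact le_min (hv i) hδx
    have h3 : v i₀ + ∑ j ∈ (Finset.range M).erase i₀, v j = ∑ i ∈ Finset.range M, v i :=
      Finset.add_sum_erase _ _ hi₀
    have h4 : v i₀ ≤ (1 - ε) * x := hA i₀ hi₀
    have : ε * x < ∑ j ∈ (Finset.range M).erase i₀, v j := by nlinarith
    calc ε * x < ∑ j ∈ (Finset.range M).erase i₀, v j := this
      _ = _ := h1
      _ ≤ _ := h2
  · push_neg at hex
    have : ∑ i ∈ Finset.range M, min (v i) (δ * x) = ∑ i ∈ Finset.range M, v i := by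
      apply Finset.sum_congr rfl
      intro i hi
      exact min_eq_left (hex i hi)
    rw [this]
    calc ε * x ≤ 1 * x := by nlinarith
      _ = x := one_mul x
      _ < _ := hS

lemma aux_chernoff {Ω : Type} [MeasurableSpace Ω] (μ : Measure Ω) [IsProbabilityMeasure μ]
    (ξ : ℕ → Ω → ℝ) (hmeas : ∀ i, Measurable (ξ i))
    (hindep : iIndepFun ξ μ)
    (hident : ∀ i, IdentDistrib (ξ i) (ξ 0) μ μ)
    (hnonneg : ∀ i ω, 0 ≤ ξ i ω)
    (M : ℕ) (l t a e₀ : ℝ) (hl : 0 ≤ l) (ht : 0 ≤ t) (he₀ : 0 ≤ e₀)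
    (Ebound : ∫ ω, min (ξ 0 ω) t ∂μ ≤ e₀) :
    (μ {ω | a < ∑ i ∈ Finset.range M, min (ξ i ω) t}).toReal
      ≤ Real.exp (-l * a) * (1 + l * Real.exp (l * t) * e₀) ^ M := by
  set Y : ℕ → Ω → ℝ := fun i ω => min (ξ i ω) t with hY
  have hYmeas : ∀ i, Measurable (Y i) := fun i => (hmeas i).min measurable_const
  have hY0 : ∀ i ω, 0 ≤ Y i ω := fun i ω => le_min (hnonneg i ω) ht
  have hYt : ∀ i ω, Y i ω ≤ t := fun i ω => min_le_right _ _
  have hYindep : iIndepFun Y μ :=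
    hindep.comp (fun _ => fun y => min y t) (fun _ => measurable_id.min measurable_const)
  have hYint : ∀ i, Integrable (fun ω => Real.exp (l * Y i ω)) μ := by
    intro i
    refine ⟨(((hYmeas i).const_mul l).exp).aestronglyMeasurable, ?_⟩
    apply HasFiniteIntegral.of_bounded (C := Real.exp (l * t))
    refine Eventually.of_forall fun ω => ?_
    rw [Real.norm_eq_abs, abs_of_pos (Real.exp_pos _)]
    exact Real.exp_le_exp.2 (mul_le_mul_of_nonneg_left (hYt i ω) hl)
  have hsum_int : Integrable (fun ω => Real.exp (l * (∑ i ∈ Finset.range M, Y i) ω)) μ := by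
    have hrw : (fun ω => Real.exp (l * (∑ i ∈ Finset.range M, Y i) ω))
        = fun ω => Real.exp (l * ∑ i ∈ Finset.range M, Y i ω) := by
      ext ω; simp [Finset.sum_apply]
    rw [hrw]
    refine ⟨((((Finset.range M).measurable_sum fun i _ => hYmeas i).const_mul l).exp).aestronglyMeasurable, ?_⟩
    apply HasFiniteIntegral.of_bounded (C := Real.exp (l * (M * t)))
    refine Eventually.of_forall fun ω => ?_
    rw [Real.norm_eq_abs, abs_of_pos (Real.exp_pos _)]
    apply Real.exp_le_exp.2
    apply mul_le_mul_of_nonneg_left _ hl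
    calc ∑ i ∈ Finset.range M, Y i ω ≤ ∑ i ∈ Finset.range M, t :=
          Finset.sum_le_sum fun i _ => hYt i ω
      _ = M * t := by rw [Finset.sum_const, Finset.card_range, nsmul_eq_mul]
  -- Chernoff
  have step1 : (μ {ω | a < ∑ i ∈ Finset.range M, min (ξ i ω) t}).toReal
      ≤ Real.exp (-l * a) * mgf (∑ i ∈ Finset.range M, Y i) μ l := by
    refine le_trans ?_ (measure_ge_le_exp_mul_mgf a hl hsum_int)
    apply ENNReal.toReal_mono (measure_ne_top _ _)
    apply measure_mono
    intro ω hω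
    simp only [mem_setOf_eq, Finset.sum_apply]
    exact le_of_lt hω
  have step2 : mgf (∑ i ∈ Finset.range M, Y i) μ l = (mgf (Y 0) μ l) ^ M := by
    rw [hYindep.mgf_sum hYmeas]
    rw [Finset.prod_congr rfl (fun i _ => ?_), Finset.prod_const, Finset.card_range]
    show mgf (Y i) μ l = mgf (Y 0) μ l
    have hid : IdentDistrib (fun ω => Real.exp (l * Y i ω)) (fun ω => Real.exp (l * Y 0 ω)) μ μ :=
      ((hident i).comp (measurable_id.min measurable_const)).comp
        ((measurable_id.const_mul l).exp)
    exact hid.integral_eq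
  have hY0int : Integrable (Y 0) μ := by
    refine ⟨(hYmeas 0).aestronglyMeasurable, ?_⟩
    apply HasFiniteIntegral.of_bounded (C := t)
    exact Eventually.of_forall fun ω => by
      rw [Real.norm_eq_abs, abs_of_nonneg (hY0 0 ω)]; exact hYt 0 ω
  have step3 : mgf (Y 0) μ l ≤ 1 + l * Real.exp (l * t) * e₀ := by
    have hptw : ∀ ω, Real.exp (l * Y 0 ω) ≤ 1 + (l * Y 0 ω) * Real.exp (l * t) := fun ω =>
      aux_exp_le (l * Y 0 ω) (l * t) (mul_nonneg hl (hY0 0 ω))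
        (mul_le_mul_of_nonneg_left (hYt 0 ω) hl)
    have hrint : Integrable (fun ω => 1 + (l * Y 0 ω) * Real.exp (l * t)) μ := by
      apply (integrable_const (1:ℝ)).add
      simp_rw [mul_assoc, mul_comm (Y 0 _) (Real.exp (l*t)), ← mul_assoc]
      exact hY0int.const_mul _
    calc mgf (Y 0) μ l = ∫ ω, Real.exp (l * Y 0 ω) ∂μ := rfl
      _ ≤ ∫ ω, (1 + (l * Y 0 ω) * Real.exp (l * t)) ∂μ :=
          integral_mono (hYint 0) hrint hptw
      _ = 1 + l * Real.exp (l * t) * ∫ ω, Y 0 ω ∂μ := by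
          rw [integral_add (integrable_const 1) ?_]
          · simp only [integral_const, measure_univ, probReal_univ, ENNReal.toReal_one, smul_eq_mul, one_mul]
            congr 1
            simp_rw [mul_assoc, mul_comm (Y 0 _) (Real.exp (l*t)), ← mul_assoc]
            rw [integral_const_mul]
          · simp_rw [mul_assoc, mul_comm (Y 0 _) (Real.exp (l*t)), ← mul_assoc]
            exact hY0int.const_mul _
      _ ≤ 1 + l * Real.exp (l * t) * e₀ := by
          have h0 : 0 ≤ l * Real.exp (l * t) := mul_nonneg hl (Real.exp_pos _).le
          nlinarith [mul_le_mul_of_nonneg_left Ebound h0]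
  calc (μ {ω | a < ∑ i ∈ Finset.range M, min (ξ i ω) t}).toReal
      ≤ Real.exp (-l * a) * mgf (∑ i ∈ Finset.range M, Y i) μ l := step1
    _ ≤ Real.exp (-l * a) * (1 + l * Real.exp (l * t) * e₀) ^ M := by
        rw [step2]
        apply mul_le_mul_of_nonneg_left _ (Real.exp_pos _).le
        exact pow_le_pow_left₀ mgf_nonneg step3 M
set_option maxHeartbeats 2000000

open Filter in
/-- **Lemma 3.1(2) (heavy-tailed sums with sublinearly many terms).**
If `ξ₁, ξ₂, …` are i.i.d. non-negative with `P(ξ₁ > t) ~ C₀ t^{-α}`, `α > 0`, and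
`0 < γ < min(α,1)`, then for any `x > 0`,
`P(Σ_{i=1}^{⌊n^γ⌋} ξ_i > x n) ~ C₀ x^{-α} n^{γ-α}` as `n → ∞`. -/
theorem heavy_tail_sublinear_sum_asymptotics {Ω : Type} [MeasurableSpace Ω] (μ : Measure Ω)
    (hμ : IsProbabilityMeasure μ) (ξ : ℕ → Ω → ℝ) (hmeas : ∀ i, Measurable (ξ i))
    (hindep : iIndepFun ξ μ)
    (hident : ∀ i, IdentDistrib (ξ i) (ξ 0) μ μ)
    (hnonneg : ∀ i ω, 0 ≤ ξ i ω)
    (C₀ α : ℝ) (hC₀ : 0 < C₀) (hα : 0 < α)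
    (htail : Tendsto (fun t : ℝ => (μ {ω | t < ξ 0 ω}).toReal / (C₀ * t ^ (-α)))
      atTop (nhds 1))
    (γ : ℝ) (hγ0 : 0 < γ) (hγ : γ < min α 1) (x : ℝ) (hx : 0 < x) :
    Tendsto (fun n : ℕ =>
        (μ {ω | x * n < ∑ i ∈ Finset.range ⌊(n : ℝ) ^ γ⌋₊, ξ i ω}).toReal /
          (C₀ * x ^ (-α) * (n : ℝ) ^ (γ - α)))
      atTop (nhds 1) := by
  haveI := hμ
  have hγα : γ < α := lt_of_lt_of_le hγ (min_le_left _ _)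
  have hγ1 : γ < 1 := lt_of_lt_of_le hγ (min_le_right _ _)
  set p : ℝ → ℝ := fun t => (μ {ω | t < ξ 0 ω}).toReal with hp_def
  have hsets : ∀ (i : ℕ) (t : ℝ), MeasurableSet {ω | t < ξ i ω} := fun i t =>
    measurableSet_lt measurable_const (hmeas i)
  have hident_tail : ∀ (i : ℕ) (t : ℝ), μ {ω | t < ξ i ω} = μ {ω | t < ξ 0 ω} := fun i t =>
    (hident i).measure_mem_eq (measurableSet_Ioi (a := t))
  have hident_pre : ∀ (i : ℕ) (t : ℝ), μ (ξ i ⁻¹' Set.Ioi t) = μ (ξ 0 ⁻¹' Set.Ioi t) :=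
    fun i t => (hident i).measure_mem_eq (measurableSet_Ioi (a := t))
  have hp0 : ∀ t, 0 ≤ p t := fun t => ENNReal.toReal_nonneg
  have hp1 : ∀ t, p t ≤ 1 := fun t => by
    rw [hp_def]
    simp only
    rw [← ENNReal.toReal_one]
    exact ENNReal.toReal_mono (by simp) prob_le_one
  -- sequential tail bounds
  have htail_seq : ∀ b : ℝ, 0 < b → ∀ ε : ℝ, 0 < ε → ∀ᶠ n : ℕ in atTop,
      (1 - ε) * (C₀ * (b * n) ^ (-α)) ≤ p (b * n) ∧
        p (b * n) ≤ (1 + ε) * (C₀ * (b * n) ^ (-α)) := by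
    intro b hb ε hε
    have h1 : Tendsto (fun n : ℕ => b * (n : ℝ)) atTop atTop :=
      (tendsto_natCast_atTop_atTop (R := ℝ)).const_mul_atTop hb
    have h2 : Tendsto (fun n : ℕ => p (b * n) / (C₀ * (b * n) ^ (-α))) atTop (nhds 1) :=
      htail.comp h1
    have h3 : ∀ᶠ n : ℕ in atTop, dist (p (b * n) / (C₀ * (b * n) ^ (-α))) 1 < ε :=
      Metric.tendsto_nhds.mp h2 ε hε
    filter_upwards [h3, eventually_gt_atTop 0] with n hn hn0
    have hn0' : (0 : ℝ) < n := by exact_mod_cast hn0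
    have hbn : 0 < b * (n : ℝ) := mul_pos hb hn0'
    have hd : 0 < C₀ * (b * n) ^ (-α) := by positivity
    rw [Real.dist_eq, abs_lt] at hn
    have key : (1 - ε) * (C₀ * (b * n) ^ (-α)) < p (b * n) ∧
        p (b * n) < (1 + ε) * (C₀ * (b * n) ^ (-α)) := by
      constructor
      · have h := hn.1
        have : (1 - ε) < p (b * n) / (C₀ * (b * n) ^ (-α)) := by linarith
        calc (1 - ε) * (C₀ * (b * n) ^ (-α))
            < (p (b * n) / (C₀ * (b * n) ^ (-α))) * (C₀ * (b * n) ^ (-α)) :=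
              mul_lt_mul_of_pos_right this hd
          _ = p (b * n) := by field_simp
      · have h := hn.2
        have : p (b * n) / (C₀ * (b * n) ^ (-α)) < 1 + ε := by linarith
        calc p (b * n) = (p (b * n) / (C₀ * (b * n) ^ (-α))) * (C₀ * (b * n) ^ (-α)) := by
              field_simp
          _ < (1 + ε) * (C₀ * (b * n) ^ (-α)) := mul_lt_mul_of_pos_right this hd
    exact ⟨key.1.le, key.2.le⟩
  -- more shared facts
  have hrpow_to_zero : ∀ s : ℝ, 0 < s → Tendsto (fun n : ℕ => (n : ℝ) ^ (-s)) atTop (nhds 0) :=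
    fun s hs => (tendsto_rpow_neg_atTop hs).comp (tendsto_natCast_atTop_atTop (R := ℝ))
  have hxa : (0:ℝ) < x ^ (-α) := Real.rpow_pos_of_pos hx _
  have hsum_meas : ∀ M : ℕ, ∀ t : ℝ, MeasurableSet {ω | t < ∑ i ∈ Finset.range M, ξ i ω} :=
    fun M t => measurableSet_lt measurable_const (Finset.measurable_sum _ fun i _ => hmeas i)
  rw [tendsto_order]
  constructor
  · -- lower bound
    intro c hc
    rcases lt_or_ge c 0 with hc0 | hc0
    · filter_upwards [eventually_ge_atTop 1] with n hn
      have hn0 : (0:ℝ) < n := by exact_mod_cast hn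
      have hG : 0 < C₀ * x ^ (-α) * (n : ℝ) ^ (γ - α) := by positivity
      exact lt_of_lt_of_le hc0 (div_nonneg ENNReal.toReal_nonneg hG.le)
    set ε : ℝ := (1 - c) / 4 with hε_def
    have hε : 0 < ε := by simp only [hε_def]; linarith
    have hε4 : ε ≤ 1 / 4 := by simp only [hε_def]; linarith
    -- smallness of m * P_n
    have hsmall : ∀ᶠ n : ℕ in atTop, 2 * C₀ * x ^ (-α) * (n:ℝ) ^ (γ - α) ≤ ε := by
      have h0 : Tendsto (fun n : ℕ => 2 * C₀ * x ^ (-α) * (n:ℝ) ^ (γ - α)) atTop (nhds 0) := by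
        have := (hrpow_to_zero (α - γ) (by linarith)).const_mul (2 * C₀ * x ^ (-α))
        simpa [show -(α - γ) = γ - α by ring] using this
      exact h0.eventually_le_const hε
    have hbig : ∀ᶠ n : ℕ in atTop, 1 ≤ ε * (n:ℝ) ^ γ := by
      have h1 : Tendsto (fun n : ℕ => ε * (n:ℝ) ^ γ) atTop atTop :=
        ((tendsto_rpow_atTop hγ0).comp (tendsto_natCast_atTop_atTop (R := ℝ))).const_mul_atTop hε
      exact h1.eventually_ge_atTop 1
    filter_upwards [htail_seq x hx ε hε, hsmall, hbig, eventually_ge_atTop 1] with n h1 h2 h3 hn1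
    have hn0 : (0:ℝ) < n := by exact_mod_cast hn1
    set M : ℕ := ⌊(n : ℝ) ^ γ⌋₊ with hM_def
    set P : ℝ := p (x * n) with hP_def
    have hP0 : 0 ≤ P := hp0 _
    have hP1 : P ≤ 1 := hp1 _
    set G : ℝ := C₀ * x ^ (-α) * (n : ℝ) ^ (γ - α) with hG_def
    have hG : 0 < G := by positivity
    have hgam : (n:ℝ) ^ γ * (n:ℝ) ^ (-α) = (n:ℝ) ^ (γ - α) := by
      rw [← Real.rpow_add hn0, sub_eq_add_neg]
    have hD_eq : C₀ * (x * (n:ℝ)) ^ (-α) = C₀ * x ^ (-α) * (n:ℝ) ^ (-α) := by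
      rw [Real.mul_rpow hx.le (Nat.cast_nonneg n)]; ring
    have hM_ub : (M:ℝ) ≤ (n:ℝ) ^ γ := Nat.floor_le (Real.rpow_nonneg hn0.le γ)
    have hM_lb : (n:ℝ) ^ γ - 1 ≤ (M:ℝ) := by
      have := Nat.lt_floor_add_one ((n:ℝ) ^ γ)
      push_cast at this ⊢
      linarith
    -- step A : 1 - (1-P)^M ≤ f n
    set q : ℝ≥0∞ := μ (ξ 0 ⁻¹' Set.Iic (x * n)) with hq_def
    have hEmeas : MeasurableSet (⋂ i ∈ Finset.range M, ξ i ⁻¹' Set.Iic (x * (n:ℝ))) :=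
      MeasurableSet.biInter (Finset.range M).countable_toSet
        (fun i _ => (hmeas i) measurableSet_Iic)
    have hprod : μ (⋂ i ∈ Finset.range M, ξ i ⁻¹' Set.Iic (x * (n:ℝ))) = q ^ M := by
      rw [hindep.measure_inter_preimage_eq_mul (Finset.range M)
        (sets := fun _ => Set.Iic (x * (n:ℝ))) (fun i _ => measurableSet_Iic)]
      rw [Finset.prod_congr rfl
        (fun i _ => (hident i).measure_mem_eq (measurableSet_Iic (a := x * (n:ℝ))))]
      rw [Finset.prod_const, Finset.card_range]
    have hq_toReal : q.toReal = 1 - P := by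
      have hcompl : (ξ 0 ⁻¹' Set.Iic (x * (n:ℝ))) = {ω | x * (n:ℝ) < ξ 0 ω}ᶜ := by
        ext ω; simp [not_lt]
      rw [hq_def, hcompl, measure_compl (hsets 0 _) (measure_ne_top _ _), measure_univ,
        ENNReal.toReal_sub_of_le prob_le_one ENNReal.one_ne_top, ENNReal.toReal_one]
    have hsub : (⋂ i ∈ Finset.range M, ξ i ⁻¹' Set.Iic (x * (n:ℝ)))ᶜ ⊆
        {ω | x * (n:ℝ) < ∑ i ∈ Finset.range M, ξ i ω} := by
      intro ω hω
      rw [Set.mem_compl_iff, Set.mem_iInter₂] at hω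
      push_neg at hω
      obtain ⟨i, hi, hlt⟩ := hω
      have hlt' : x * (n:ℝ) < ξ i ω := not_le.mp (fun h => hlt h)
      have : ξ i ω ≤ ∑ j ∈ Finset.range M, ξ j ω :=
        Finset.single_le_sum (fun j _ => hnonneg j ω) hi
      exact lt_of_lt_of_le hlt' this
    have hfE : 1 - (1 - P) ^ M ≤
        (μ {ω | x * (n:ℝ) < ∑ i ∈ Finset.range M, ξ i ω}).toReal := by
      have h5 : μ ((⋂ i ∈ Finset.range M, ξ i ⁻¹' Set.Iic (x * (n:ℝ)))ᶜ)
          ≤ μ {ω | x * (n:ℝ) < ∑ i ∈ Finset.range M, ξ i ω} := measure_mono hsub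
      have h6 : (μ (⋂ i ∈ Finset.range M, ξ i ⁻¹' Set.Iic (x * (n:ℝ)))ᶜ).toReal
          = 1 - q.toReal ^ M := by
        have hq1 : q ≤ 1 := prob_le_one
        rw [measure_compl hEmeas (measure_ne_top _ _), measure_univ, hprod,
          ENNReal.toReal_sub_of_le (pow_le_one' hq1 M) ENNReal.one_ne_top,
          ENNReal.toReal_one, ENNReal.toReal_pow]
      have h7 := ENNReal.toReal_mono (measure_ne_top _ _) h5
      rw [h6, hq_toReal] at h7
      exact h7
    have hlow : (M:ℝ) * P - ((M:ℝ) * P) ^ 2 ≤ 1 - (1 - P) ^ M := aux_pow_lb P hP0 hP1 M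
    -- numeric assembly
    have hnγ0 : (0:ℝ) ≤ (n:ℝ) ^ γ := Real.rpow_nonneg hn0.le γ
    have hMP_small : (M:ℝ) * P ≤ ε := by
      have hD0 : 0 ≤ C₀ * (x * (n:ℝ)) ^ (-α) := by positivity
      calc (M:ℝ) * P ≤ (n:ℝ) ^ γ * ((1 + ε) * (C₀ * (x * (n:ℝ)) ^ (-α))) := by
            apply mul_le_mul hM_ub h1.2 hP0 hnγ0
        _ = (1 + ε) * (C₀ * x ^ (-α) * ((n:ℝ) ^ γ * (n:ℝ) ^ (-α))) := by
            rw [hD_eq]; ring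
        _ = (1 + ε) * (C₀ * x ^ (-α) * (n:ℝ) ^ (γ - α)) := by rw [hgam]
        _ ≤ 2 * C₀ * x ^ (-α) * (n:ℝ) ^ (γ - α) := by
            have h : (0:ℝ) ≤ C₀ * x ^ (-α) * (n:ℝ) ^ (γ - α) := by positivity
            nlinarith [hε4]
        _ ≤ ε := h2
    have hMP0 : 0 ≤ (M:ℝ) * P := mul_nonneg (Nat.cast_nonneg M) hP0
    have hstep1 : (1 - ε) * ((M:ℝ) * P) ≤ (M:ℝ) * P - ((M:ℝ) * P) ^ 2 := by nlinarith
    have hstep2 : ((1 - ε) * (n:ℝ) ^ γ) * ((1 - ε) * (C₀ * (x * (n:ℝ)) ^ (-α)))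
        ≤ (M:ℝ) * P := by
      apply mul_le_mul ?_ h1.1 (mul_nonneg (by linarith) (by positivity)) (Nat.cast_nonneg M)
      have : ε * (n:ℝ) ^ γ ≥ 1 := h3
      nlinarith
    have hchain : (1 - ε) ^ 3 * G ≤
        (μ {ω | x * (n:ℝ) < ∑ i ∈ Finset.range M, ξ i ω}).toReal := by
      have e1 : ((1 - ε) * (n:ℝ) ^ γ) * ((1 - ε) * (C₀ * (x * (n:ℝ)) ^ (-α)))
          = (1 - ε) ^ 2 * ((n:ℝ) ^ γ * (C₀ * x ^ (-α) * (n:ℝ) ^ (-α))) := by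
        rw [hD_eq]; ring
      have e2 : (n:ℝ) ^ γ * (C₀ * x ^ (-α) * (n:ℝ) ^ (-α)) = G := by
        rw [hG_def, ← hgam]; ring
      have h8 : (1 - ε) ^ 2 * G ≤ (M:ℝ) * P := by rw [← e2, ← e1]; exact hstep2
      have h9 : (1 - ε) * ((1 - ε) ^ 2 * G) ≤ (1 - ε) * ((M:ℝ) * P) :=
        mul_le_mul_of_nonneg_left h8 (by linarith)
      calc (1 - ε) ^ 3 * G = (1 - ε) * ((1 - ε) ^ 2 * G) := by ring
        _ ≤ (1 - ε) * ((M:ℝ) * P) := h9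
        _ ≤ (M:ℝ) * P - ((M:ℝ) * P) ^ 2 := hstep1
        _ ≤ 1 - (1 - P) ^ M := hlow
        _ ≤ _ := hfE
    have hc_lt : c < (1 - ε) ^ 3 := by
      have factored : (1 - ε) ^ 3 - c = ((1 - c) * (27 - 10 * c - c ^ 2)) / 64 := by
        rw [hε_def]; ring
      have hpos : 0 < (1 - c) * (27 - 10 * c - c ^ 2) :=
        mul_pos (by linarith) (by nlinarith)
      linarith [factored, hpos]
    rw [lt_div_iff₀ hG]
    calc c * G < (1 - ε) ^ 3 * G := mul_lt_mul_of_pos_right hc_lt hG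
      _ ≤ _ := hchain
  · -- upper bound
    intro c hc
    -- choose ε
    obtain ⟨ε, hεmem, hεc⟩ : ∃ ε : ℝ, ε ∈ Set.Ioo (0:ℝ) (1/2) ∧
        (1 + ε) * (1 - ε) ^ (-α) + 2 * ε < c := by
      have h1 : ContinuousAt (fun ε : ℝ => (1 - ε)) 0 :=
        (continuous_const.sub continuous_id).continuousAt
      have h2 : ContinuousAt (fun ε : ℝ => (1 - ε) ^ (-α)) 0 :=
        h1.rpow_const (by norm_num)
      have hcont : ContinuousAt (fun ε : ℝ => (1 + ε) * (1 - ε) ^ (-α) + 2 * ε) 0 :=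
        (((continuous_const.add continuous_id).continuousAt).mul h2).add
          ((continuous_const.mul continuous_id).continuousAt)
      have hval : (1 + (0:ℝ)) * (1 - (0:ℝ)) ^ (-α) + 2 * (0:ℝ) = 1 := by
        norm_num
      have htend : Tendsto (fun ε : ℝ => (1 + ε) * (1 - ε) ^ (-α) + 2 * ε)
          (nhdsWithin 0 (Set.Ioi 0)) (nhds 1) := by
        have h3 := hcont.tendsto
        simp only [sub_zero, add_zero, mul_zero, Real.one_rpow, mul_one, one_mul] at h3
        exact h3.mono_left nhdsWithin_le_nhds
      have h4 : ∀ᶠ ε in nhdsWithin (0:ℝ) (Set.Ioi 0),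
          (1 + ε) * (1 - ε) ^ (-α) + 2 * ε < c := htend.eventually_lt_const hc
      have h5 : ∀ᶠ ε in nhdsWithin (0:ℝ) (Set.Ioi 0), ε ∈ Set.Ioo (0:ℝ) (1/2) :=
        Ioo_mem_nhdsGT_of_mem ⟨le_refl 0, by norm_num⟩
      obtain ⟨ε, hmem, hlt⟩ := (h5.and h4).exists
      exact ⟨ε, hmem, hlt⟩
    obtain ⟨hε0, hε2⟩ := hεmem
    have hε1 : ε ≤ 1 := by linarith
    -- tail constant s₀
    obtain ⟨s₀, hs₀1, hs₀⟩ : ∃ s₀ : ℝ, 1 ≤ s₀ ∧ ∀ s, s₀ ≤ s → p s ≤ 2 * (C₀ * s ^ (-α)) := by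
      have h2C : ∀ᶠ s : ℝ in atTop, p s ≤ 2 * (C₀ * s ^ (-α)) := by
        have h := htail.eventually_le_const (show (1:ℝ) < 2 by norm_num)
        filter_upwards [h, eventually_ge_atTop 1] with s hs hs1
        have hs0 : (0:ℝ) < s := by linarith
        have hden : 0 < C₀ * s ^ (-α) := by positivity
        calc p s = p s / (C₀ * s ^ (-α)) * (C₀ * s ^ (-α)) := by field_simp
          _ ≤ 2 * (C₀ * s ^ (-α)) := mul_le_mul_of_nonneg_right hs hden.le
      obtain ⟨s₁, hs₁⟩ := eventually_atTop.mp h2C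
      exact ⟨max s₁ 1, le_max_right _ _, fun s hs => hs₁ s (le_trans (le_max_left _ _) hs)⟩
    have hs₀0 : (0:ℝ) < s₀ := by linarith
    -- exponent α'
    set α' : ℝ := (γ + min α 1) / 2 with hα'_def
    have hminα : min α 1 ≤ α := min_le_left _ _
    have hmin1 : min α 1 ≤ 1 := min_le_right _ _
    have hmin0 : 0 < min α 1 := lt_min hα one_pos
    have hγα' : γ < α' := by rw [hα'_def]; linarith [hγ]
    have hα'1 : α' < 1 := by rw [hα'_def]; linarith
    have hα'α : α' < α := by rw [hα'_def]; linarith [hγα]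
    have hα'0 : 0 < α' := by rw [hα'_def]; linarith
    -- truncated moment bound
    set ctail : ℝ := s₀ ^ α' + 2 * C₀ * s₀ ^ (α' - α) with hct_def
    have hctail0 : 0 ≤ ctail := by positivity
    set cE : ℝ := ctail / (1 - α') with hcE_def
    have hcE0 : 0 ≤ cE := by
      apply div_nonneg hctail0; linarith
    have hmom : ∀ t : ℝ, s₀ ≤ t → ∫ ω, min (ξ 0 ω) t ∂μ ≤ cE * t ^ (1 - α') := by
      intro t ht
      have ht0 : 0 < t := lt_of_lt_of_le hs₀0 ht
      refine aux_trunc_moment μ (ξ 0) (hmeas 0) (hnonneg 0) α' ctail t hα'0 hα'1 hctail0 ht0 ?_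
      intro s hs0 hst
      have hsneg : (0:ℝ) ≤ s ^ (-α') := (Real.rpow_pos_of_pos hs0 _).le
      rcases le_or_gt s₀ s with hss | hss
      · have h1 := hs₀ s hss
        have hsplit : s ^ (-α) = s ^ (α' - α) * s ^ (-α') := by
          rw [← Real.rpow_add hs0]; congr 1; ring
        have h2 : s ^ (α' - α) ≤ s₀ ^ (α' - α) :=
          Real.rpow_le_rpow_of_nonpos hs₀0 hss (by linarith)
        have h3 : 2 * (C₀ * s ^ (-α)) ≤ 2 * C₀ * s₀ ^ (α' - α) * s ^ (-α') := by
          rw [hsplit]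
          have := mul_le_mul_of_nonneg_right h2 hsneg
          nlinarith
        have h4 : 2 * C₀ * s₀ ^ (α' - α) * s ^ (-α') ≤ ctail * s ^ (-α') := by
          have hpos : (0:ℝ) ≤ s₀ ^ α' := (Real.rpow_pos_of_pos hs₀0 _).le
          have := mul_le_mul_of_nonneg_right
            (show 2 * C₀ * s₀ ^ (α' - α) ≤ ctail by rw [hct_def]; nlinarith) hsneg
          exact this
        exact (h1.trans h3).trans h4
      · have h1 : (μ {ω | s < ξ 0 ω}).toReal ≤ 1 := hp1 s
        have h2 : s₀ ^ α' * s₀ ^ (-α') ≤ s₀ ^ α' * s ^ (-α') :=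
          mul_le_mul_of_nonneg_left
            (Real.rpow_le_rpow_of_nonpos hs0 hss.le (by linarith))
            (Real.rpow_pos_of_pos hs₀0 _).le
        have h3 : s₀ ^ α' * s₀ ^ (-α') = 1 := by
          rw [← Real.rpow_add hs₀0]; simp
        have h4 : s₀ ^ α' * s ^ (-α') ≤ ctail * s ^ (-α') := by
          apply mul_le_mul_of_nonneg_right _ hsneg
          rw [hct_def]
          have : (0:ℝ) ≤ 2 * C₀ * s₀ ^ (α' - α) := by positivity
          linarith
        calc (μ {ω | s < ξ 0 ω}).toReal ≤ 1 := h1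
          _ = s₀ ^ α' * s₀ ^ (-α') := h3.symm
          _ ≤ s₀ ^ α' * s ^ (-α') := h2
          _ ≤ ctail * s ^ (-α') := h4
    -- choose δ
    set δ : ℝ := min (ε * (α' - γ) / (4 * α)) ε with hδ_def
    have hδ0 : 0 < δ := lt_min (div_pos (mul_pos hε0 (by linarith [hγα'])) (by linarith)) hε0
    have hδε : δ ≤ ε := min_le_right _ _
    set ρ : ℝ := α' - γ - α * δ / ε with hρ_def
    have hαδε : α * δ / ε ≤ (α' - γ) / 4 := by
      have h1 : δ ≤ ε * (α' - γ) / (4 * α) := min_le_left _ _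
      have h2 : α * δ ≤ α * (ε * (α' - γ) / (4 * α)) := by
        exact mul_le_mul_of_nonneg_left h1 hα.le
      have h3 : α * (ε * (α' - γ) / (4 * α)) = ε * (α' - γ) / 4 := by
        field_simp
      rw [div_le_div_iff₀ hε0 (by norm_num : (0:ℝ) < 4)]
      rw [h3] at h2
      nlinarith [h2]
    have hρ0 : 0 < ρ := by rw [hρ_def]; linarith [hγα']
    -- the constant in the Chernoff error term
    set Cd : ℝ := α / (ε * x) * cE * (δ * x) ^ (1 - α') with hCd_def
    set W : ℕ → ℝ := fun n => Cd * Real.log n * (n:ℝ) ^ (-ρ) with hW_def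
    have hW0 : Tendsto W atTop (nhds 0) := by
      have h1 : Tendsto (fun s : ℝ => Real.log s / s ^ ρ) atTop (nhds 0) :=
        (isLittleO_log_rpow_atTop hρ0).tendsto_div_nhds_zero
      have h2 : Tendsto (fun n : ℕ => Real.log n / (n:ℝ) ^ ρ) atTop (nhds 0) :=
        h1.comp (tendsto_natCast_atTop_atTop (R := ℝ))
      have h3 := h2.const_mul Cd
      rw [mul_zero] at h3
      apply h3.congr'
      filter_upwards [eventually_gt_atTop 0] with n hn
      have hn0 : (0:ℝ) < n := by exact_mod_cast hn
      rw [hW_def]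
      simp only
      rw [Real.rpow_neg hn0.le, div_eq_mul_inv]
      ring
    -- eventual facts
    set K2 : ℝ := (2 * C₀ * (δ * x) ^ (-α)) ^ 2 with hK2_def
    have e3' : ∀ᶠ n : ℕ in atTop, K2 * (n:ℝ) ^ (γ - α) ≤ ε * (C₀ * x ^ (-α)) := by
      have h0 := (hrpow_to_zero (α - γ) (by linarith)).const_mul K2
      rw [mul_zero] at h0
      have h0' : Tendsto (fun n : ℕ => K2 * (n:ℝ) ^ (γ - α)) atTop (nhds 0) := by
        apply h0.congr
        intro n
        congr 1
        congr 1
        ring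
      exact h0'.eventually_le_const (by positivity)
    have e4' : ∀ᶠ n : ℕ in atTop, 3 * (n:ℝ) ^ (-γ) ≤ ε * (C₀ * x ^ (-α)) := by
      have h0 := (hrpow_to_zero γ hγ0).const_mul 3
      rw [mul_zero] at h0
      exact h0.eventually_le_const (by positivity)
    have e5' : ∀ᶠ n : ℕ in atTop, s₀ ≤ δ * (x * (n:ℝ)) := by
      have h1 : Tendsto (fun n : ℕ => δ * (x * (n:ℝ))) atTop atTop :=
        ((tendsto_natCast_atTop_atTop (R := ℝ)).const_mul_atTop hx).const_mul_atTop hδ0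
      exact h1.eventually_ge_atTop s₀
    have e7' : ∀ᶠ n : ℕ in atTop, W n ≤ 1 := hW0.eventually_le_const one_pos
    filter_upwards [htail_seq ((1 - ε) * x) (mul_pos (by linarith) hx) ε hε0,
      htail_seq (δ * x) (by positivity) ε hε0, e3', e4', e5', e7',
      eventually_ge_atTop 2] with n e1 e2 e3 e4 e5 e7 hn2
    have hn1' : 1 < n := hn2
    have hn1 : (1:ℝ) < n := by exact_mod_cast hn1'
    have hn0 : (0:ℝ) < n := lt_trans one_pos hn1
    have hlogn : 0 < Real.log n := Real.log_pos hn1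
    rw [mul_assoc (1 - ε) x ((n:ℝ))] at e1
    rw [mul_assoc δ x ((n:ℝ))] at e2
    set X : ℝ := x * (n:ℝ) with hX_def
    have hX0 : 0 < X := by rw [hX_def]; positivity
    set M : ℕ := ⌊(n : ℝ) ^ γ⌋₊ with hM_def
    have hM_ub : (M:ℝ) ≤ (n:ℝ) ^ γ := Nat.floor_le (Real.rpow_nonneg hn0.le γ)
    set G : ℝ := C₀ * x ^ (-α) * (n : ℝ) ^ (γ - α) with hG_def
    have hG : 0 < G := by positivity
    have hgam : (n:ℝ) ^ γ * (n:ℝ) ^ (-α) = (n:ℝ) ^ (γ - α) := by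
      rw [← Real.rpow_add hn0, sub_eq_add_neg]
    set l : ℝ := α * Real.log n / (ε * X) with hl_def
    have hl0 : 0 ≤ l := by
      apply div_nonneg (by positivity) (by positivity)
    -- the three events
    set SA : Set Ω := ⋃ i ∈ Finset.range M, ξ i ⁻¹' Set.Ioi ((1 - ε) * X) with hSA_def
    set SB : Set Ω := ⋃ i ∈ Finset.range M, ⋃ j ∈ (Finset.range M).erase i,
      (ξ i ⁻¹' Set.Ioi (δ * X) ∩ ξ j ⁻¹' Set.Ioi (δ * X)) with hSB_def
    set SC : Set Ω := {ω | ε * X < ∑ i ∈ Finset.range M, min (ξ i ω) (δ * X)} with hSC_def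
    have hincl : {ω | X < ∑ i ∈ Finset.range M, ξ i ω} ⊆ SA ∪ SB ∪ SC := by
      intro ω hω
      by_cases hA : ω ∈ SA
      · exact Or.inl (Or.inl hA)
      by_cases hB : ω ∈ SB
      · exact Or.inl (Or.inr hB)
      refine Or.inr ?_
      rw [hSC_def]
      refine aux_inclusion M (fun i => ξ i ω) (fun i => hnonneg i ω) X ε δ hX0.le
        (by positivity) hε1 ?_ ?_ hω
      · intro i hi
        rw [hSA_def] at hA
        simp only [Set.mem_iUnion, not_exists] at hA
        have := hA i hi
        simp only [Set.mem_preimage, Set.mem_Ioi] at this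
        exact not_lt.mp this
      · rintro ⟨i, hi, j, hj, hne, h₁, h₂⟩
        apply hB
        rw [hSB_def]
        simp only [Set.mem_iUnion]
        exact ⟨i, hi, j, Finset.mem_erase.mpr ⟨Ne.symm hne, hj⟩, h₁, h₂⟩
    have hSAm : MeasurableSet SA :=
      MeasurableSet.biUnion (Finset.range M).countable_toSet
        (fun i _ => (hmeas i) measurableSet_Ioi)
    have hSBm : MeasurableSet SB :=
      MeasurableSet.biUnion (Finset.range M).countable_toSet fun i _ =>
        MeasurableSet.biUnion ((Finset.range M).erase i).countable_toSet fun j _ =>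
          ((hmeas i) measurableSet_Ioi).inter ((hmeas j) measurableSet_Ioi)
    have hsplit : (μ {ω | X < ∑ i ∈ Finset.range M, ξ i ω}).toReal
        ≤ (μ SA).toReal + (μ SB).toReal + (μ SC).toReal := by
      have hμ1 : μ {ω | X < ∑ i ∈ Finset.range M, ξ i ω} ≤ μ SA + μ SB + μ SC :=
        (measure_mono hincl).trans ((measure_union_le _ _).trans
          (add_le_add_left (measure_union_le _ _) _))
      have hfin : μ SA + μ SB + μ SC ≠ ⊤ :=
        ENNReal.add_ne_top.2 ⟨ENNReal.add_ne_top.2 ⟨measure_ne_top _ _, measure_ne_top _ _⟩,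
          measure_ne_top _ _⟩
      have h2 := ENNReal.toReal_mono hfin hμ1
      rwa [ENNReal.toReal_add (ENNReal.add_ne_top.2 ⟨measure_ne_top _ _, measure_ne_top _ _⟩)
          (measure_ne_top _ _),
        ENNReal.toReal_add (measure_ne_top _ _) (measure_ne_top _ _)] at h2
    -- T1
    have hT1 : (μ SA).toReal ≤ (M:ℝ) * p ((1 - ε) * X) := by
      have h := measure_biUnion_finset_le (μ := μ) (Finset.range M)
        (fun i => ξ i ⁻¹' Set.Ioi ((1 - ε) * X))
      have heach : ∀ i ∈ Finset.range M,
          μ (ξ i ⁻¹' Set.Ioi ((1 - ε) * X)) = μ {ω | (1 - ε) * X < ξ 0 ω} :=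
        fun i _ => hident_tail i _
      rw [Finset.sum_congr rfl heach, Finset.sum_const, Finset.card_range,
        nsmul_eq_mul] at h
      have h2 := ENNReal.toReal_mono (by finiteness) h
      rwa [ENNReal.toReal_mul, ENNReal.toReal_natCast] at h2
    -- T2
    have hT2 : (μ SB).toReal ≤ (M:ℝ) * ((M:ℝ) * (p (δ * X) * p (δ * X))) := by
      set qδ : ℝ≥0∞ := μ {ω | δ * X < ξ 0 ω} with hqδ_def
      have hpair : ∀ i ∈ Finset.range M, ∀ j ∈ (Finset.range M).erase i,
          μ (ξ i ⁻¹' Set.Ioi (δ * X) ∩ ξ j ⁻¹' Set.Ioi (δ * X)) = qδ * qδ := by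
        intro i hi j hj
        have hne : j ≠ i := Finset.ne_of_mem_erase hj
        have hind : IndepFun (ξ i) (ξ j) μ := hindep.indepFun (Ne.symm hne)
        rw [hind.measure_inter_preimage_eq_mul _ _ measurableSet_Ioi measurableSet_Ioi,
          hident_pre i, hident_pre j]
        rfl
      have hb : μ SB ≤ ∑ i ∈ Finset.range M, ∑ j ∈ (Finset.range M).erase i, (qδ * qδ) := by
        refine (measure_biUnion_finset_le _ _).trans (Finset.sum_le_sum fun i hi => ?_)
        refine (measure_biUnion_finset_le _ _).trans (le_of_eq ?_)
        exact Finset.sum_congr rfl (hpair i hi)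
      have hb2 : ∑ i ∈ Finset.range M, ∑ j ∈ (Finset.range M).erase i, (qδ * qδ)
          ≤ (M : ℝ≥0∞) * ((M : ℝ≥0∞) * (qδ * qδ)) := by
        calc ∑ i ∈ Finset.range M, ∑ j ∈ (Finset.range M).erase i, (qδ * qδ)
            ≤ ∑ i ∈ Finset.range M, ∑ j ∈ Finset.range M, (qδ * qδ) :=
              Finset.sum_le_sum fun i _ =>
                Finset.sum_le_sum_of_subset (Finset.erase_subset _ _)
          _ = (M : ℝ≥0∞) * ((M : ℝ≥0∞) * (qδ * qδ)) := by
              simp [Finset.sum_const, Finset.card_range, nsmul_eq_mul, mul_assoc]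
      have h2 := ENNReal.toReal_mono (by finiteness) (hb.trans hb2)
      rwa [ENNReal.toReal_mul, ENNReal.toReal_mul, ENNReal.toReal_mul,
        ENNReal.toReal_natCast] at h2
    -- T3 via Chernoff
    have hT3 : (μ SC).toReal ≤ 3 * (n:ℝ) ^ (-α) := by
      have hcher := aux_chernoff μ ξ hmeas hindep hident hnonneg M l (δ * X) (ε * X)
        (cE * (δ * X) ^ (1 - α')) hl0 (by positivity) (by positivity) (hmom (δ * X) e5)
      have hexp1 : Real.exp (-l * (ε * X)) = (n:ℝ) ^ (-α) := by
        have hval : -l * (ε * X) = Real.log n * (-α) := by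
          rw [hl_def]; field_simp
        rw [hval, Real.rpow_def_of_pos hn0]
      have hv0 : 0 ≤ l * Real.exp (l * (δ * X)) * (cE * (δ * X) ^ (1 - α')) := by positivity
      have hMv : (M:ℝ) * (l * Real.exp (l * (δ * X)) * (cE * (δ * X) ^ (1 - α'))) ≤ W n := by
        have hexp2 : Real.exp (l * (δ * X)) = (n:ℝ) ^ (α * δ / ε) := by
          have hval : l * (δ * X) = Real.log n * (α * δ / ε) := by
            rw [hl_def]; field_simp
          rw [hval, Real.rpow_def_of_pos hn0]
        have htδpow : (δ * X) ^ (1 - α') = (δ * x) ^ (1 - α') * (n:ℝ) ^ (1 - α') := by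
          rw [show δ * X = (δ * x) * (n:ℝ) by rw [hX_def]; ring,
            Real.mul_rpow (by positivity) (Nat.cast_nonneg n)]
        have hexps : (n:ℝ) ^ γ * (n:ℝ) ^ (α * δ / ε) * (n:ℝ) ^ (1 - α')
            = ((n:ℝ) ^ (-ρ) * (n:ℝ) ^ (1:ℝ)) := by
          rw [← Real.rpow_add hn0, ← Real.rpow_add hn0, ← Real.rpow_add hn0]
          congr 1
          rw [hρ_def]
          ring
        have hgv : (n:ℝ) ^ γ * (l * Real.exp (l * (δ * X)) * (cE * (δ * X) ^ (1 - α')))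
            = W n := by
          rw [hexp2, htδpow, hl_def, hW_def]
          simp only
          rw [hX_def, hCd_def]
          have hcalc : (n:ℝ) ^ γ * (α * Real.log ↑n / (ε * (x * ↑n)) * (n:ℝ) ^ (α * δ / ε) *
              (cE * ((δ * x) ^ (1 - α') * (n:ℝ) ^ (1 - α'))))
              = (α / (ε * x) * cE * (δ * x) ^ (1 - α')) * Real.log ↑n *
                (((n:ℝ) ^ γ * (n:ℝ) ^ (α * δ / ε) * (n:ℝ) ^ (1 - α')) / (n:ℝ)) := by
            field_simp
          rw [hcalc, hexps, Real.rpow_one]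
          field_simp
        calc (M:ℝ) * (l * Real.exp (l * (δ * X)) * (cE * (δ * X) ^ (1 - α')))
            ≤ (n:ℝ) ^ γ * (l * Real.exp (l * (δ * X)) * (cE * (δ * X) ^ (1 - α'))) :=
              mul_le_mul_of_nonneg_right hM_ub hv0
          _ = W n := hgv
      have hWn1 : W n ≤ 1 := e7
      have hpow : (1 + l * Real.exp (l * (δ * X)) * (cE * (δ * X) ^ (1 - α'))) ^ M
          ≤ Real.exp 1 := by
        refine (aux_one_add_pow_le _ hv0 M).trans (Real.exp_le_exp.2 ?_)
        exact hMv.trans hWn1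
      have hcher2 : (μ SC).toReal ≤ (n:ℝ) ^ (-α) * Real.exp 1 := by
        refine hcher.trans ?_
        rw [hexp1]
        exact mul_le_mul_of_nonneg_left hpow (Real.rpow_pos_of_pos hn0 _).le
      have hexp3 : Real.exp 1 ≤ 3 := by
        have h := Real.exp_one_lt_d9
        linarith only [h]
      calc (μ SC).toReal ≤ (n:ℝ) ^ (-α) * Real.exp 1 := hcher2
        _ ≤ (n:ℝ) ^ (-α) * 3 := mul_le_mul_of_nonneg_left hexp3 (Real.rpow_pos_of_pos hn0 _).le
        _ = 3 * (n:ℝ) ^ (-α) := mul_comm _ _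
    -- numeric assembly
    have hB1 : (M:ℝ) * p ((1 - ε) * X) ≤ (1 + ε) * (1 - ε) ^ (-α) * G := by
      have hexpand : C₀ * ((1 - ε) * X) ^ (-α)
          = (1 - ε) ^ (-α) * (C₀ * x ^ (-α) * (n:ℝ) ^ (-α)) := by
        rw [hX_def, Real.mul_rpow (sub_nonneg.mpr hε1) (by positivity),
          Real.mul_rpow hx.le (Nat.cast_nonneg n)]
        ring
      calc (M:ℝ) * p ((1 - ε) * X)
          ≤ (n:ℝ) ^ γ * ((1 + ε) * (C₀ * ((1 - ε) * X) ^ (-α))) := by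
            apply mul_le_mul hM_ub e1.2 (hp0 _) (by positivity)
        _ = (1 + ε) * (1 - ε) ^ (-α) * (C₀ * x ^ (-α) * ((n:ℝ) ^ γ * (n:ℝ) ^ (-α))) := by
            rw [hexpand]; ring
        _ = (1 + ε) * (1 - ε) ^ (-α) * G := by rw [hgam, hG_def]
    have hpδ : p (δ * X) ≤ 2 * C₀ * (δ * x) ^ (-α) * (n:ℝ) ^ (-α) := by
      have hexpand : C₀ * (δ * X) ^ (-α) = C₀ * (δ * x) ^ (-α) * (n:ℝ) ^ (-α) := by
        rw [hX_def, show δ * (x * (n:ℝ)) = (δ * x) * (n:ℝ) by ring,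
          Real.mul_rpow (by positivity) (Nat.cast_nonneg n)]
        ring
      calc p (δ * X) ≤ (1 + ε) * (C₀ * (δ * X) ^ (-α)) := e2.2
        _ ≤ 2 * (C₀ * (δ * X) ^ (-α)) := by
            have h0 : 0 ≤ C₀ * (δ * X) ^ (-α) := by positivity
            have h1 := mul_nonneg (sub_nonneg.mpr hε1) h0
            linarith only [h1]
        _ = 2 * C₀ * (δ * x) ^ (-α) * (n:ℝ) ^ (-α) := by rw [hexpand]; ring
    have hB2 : (M:ℝ) * ((M:ℝ) * (p (δ * X) * p (δ * X))) ≤ ε * G := by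
      have hppos : 0 ≤ p (δ * X) := hp0 _
      have hq : (M:ℝ) * ((M:ℝ) * (p (δ * X) * p (δ * X)))
          ≤ ((n:ℝ) ^ γ * (n:ℝ) ^ (-α)) ^ 2 * (2 * C₀ * (δ * x) ^ (-α)) ^ 2 := by
        have h1 : (M:ℝ) * p (δ * X) ≤ (n:ℝ) ^ γ * (2 * C₀ * (δ * x) ^ (-α) * (n:ℝ) ^ (-α)) :=
          mul_le_mul hM_ub hpδ hppos (by positivity)
        have h2 : 0 ≤ (M:ℝ) * p (δ * X) := mul_nonneg (Nat.cast_nonneg M) hppos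
        calc (M:ℝ) * ((M:ℝ) * (p (δ * X) * p (δ * X)))
            = ((M:ℝ) * p (δ * X)) ^ 2 := by ring
          _ ≤ ((n:ℝ) ^ γ * (2 * C₀ * (δ * x) ^ (-α) * (n:ℝ) ^ (-α))) ^ 2 := by
              apply pow_le_pow_left₀ h2 h1
          _ = ((n:ℝ) ^ γ * (n:ℝ) ^ (-α)) ^ 2 * (2 * C₀ * (δ * x) ^ (-α)) ^ 2 := by ring
      calc (M:ℝ) * ((M:ℝ) * (p (δ * X) * p (δ * X)))
          ≤ ((n:ℝ) ^ γ * (n:ℝ) ^ (-α)) ^ 2 * (2 * C₀ * (δ * x) ^ (-α)) ^ 2 := hq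
        _ = (K2 * (n:ℝ) ^ (γ - α)) * (n:ℝ) ^ (γ - α) := by
            rw [hgam, hK2_def]; ring
        _ ≤ (ε * (C₀ * x ^ (-α))) * (n:ℝ) ^ (γ - α) := by
            apply mul_le_mul_of_nonneg_right e3 (by positivity)
        _ = ε * G := by rw [hG_def]; ring
    have hB3 : 3 * (n:ℝ) ^ (-α) ≤ ε * G := by
      have hsplit2 : (n:ℝ) ^ (-α) = (n:ℝ) ^ (-γ) * (n:ℝ) ^ (γ - α) := by
        rw [← Real.rpow_add hn0]; congr 1; ring
      calc 3 * (n:ℝ) ^ (-α) = (3 * (n:ℝ) ^ (-γ)) * (n:ℝ) ^ (γ - α) := by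
            rw [hsplit2]; ring
        _ ≤ (ε * (C₀ * x ^ (-α))) * (n:ℝ) ^ (γ - α) :=
            mul_le_mul_of_nonneg_right e4 (by positivity)
        _ = ε * G := by rw [hG_def]; ring
    have hfinal : (μ {ω | X < ∑ i ∈ Finset.range M, ξ i ω}).toReal
        ≤ ((1 + ε) * (1 - ε) ^ (-α) + 2 * ε) * G := by
      calc (μ {ω | X < ∑ i ∈ Finset.range M, ξ i ω}).toReal
          ≤ (μ SA).toReal + (μ SB).toReal + (μ SC).toReal := hsplit
        _ ≤ ((1 + ε) * (1 - ε) ^ (-α) * G) + (ε * G) + (ε * G) := by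
            gcongr
            · exact hT1.trans hB1
            · exact hT2.trans hB2
            · exact hT3.trans hB3
        _ = ((1 + ε) * (1 - ε) ^ (-α) + 2 * ε) * G := by ring
    rw [div_lt_iff₀ hG]
    calc (μ {ω | X < ∑ i ∈ Finset.range M, ξ i ω}).toReal
        ≤ ((1 + ε) * (1 - ε) ^ (-α) + 2 * ε) * G := hfinal
      _ < c * G := mul_lt_mul_of_pos_right hεc hG

end AuxHeavyTail
end
end
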